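/- Let n ≥ 3 and m ≥ 2 be integers. Let U ⊆ ℝ^{n+1} be open, and let Ω : U → ℝ and g, ĝ, q : U → Sym(n+1, ℝ) be of class C², with g and ĝ pointwise invertible coordinate metrics related by g_{αβ} = ĝ_{αβ} + Ω^m q_{αβ}. Assume the g-gradient of Ω is nowhere null on U: N := g^{αβ}∂_αΩ ∂_βΩ ≠ 0; set ε := sign(N) ∈ {±1}, F := |N|^{1/2}, u_α := F⁻¹ ∂_αΩ (so g^{αβ}u_αu_β = ε), h_{αβ} := g_{αβ} − ε u_α u_β, t_{αβ} := q_{μν} h^μ_α h^ν_β, t := g^{αβ} t_{αβ}, t̃_{αβ} := t_{αβ} − (t/n) h_{αβ}, and K_m(Ω) := m(m−1) Ω^{m−2} F², where indices are raised with g. Define E^μ_{ναβ} := C(g)^μ_{ναβ} − C(ĝ)^μ_{ναβ} + K_m(Ω)·((n−2)/(n−1))·( u^μ u_{[α} t̃_{β]ν} + t̃^μ_{[α} u_{β]} u_ν ) − ( ε K_m(Ω)/(n−1) )·( h^μ_{[α} t̃_{β]ν} + t̃^μ_{[α} h_{β]ν} ), where C(g) and C(ĝ) are the Weyl tensors of g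 and ĝ. Then for every x₀ ∈ U with Ω(x₀) = 0 and all indices μ, ν, α, β, one has Ω(x)^{2−m} E^μ_{ναβ}(x) → 0 as x → x₀ within {Ω ≠ 0}. -/

import Mathlib

open scoped BigOperators Matrix

/-- Partial derivative `∂_α f` of a scalar function on `ℝ^N`. -/
noncomputable def pd {N : ℕ} (α : Fin N) (f : (Fin N → ℝ) → ℝ) (x : Fin N → ℝ) : ℝ :=
  fderiv ℝ f x (Pi.single α 1)

/-- Christoffel symbols `Γ^μ_{αβ}` of a coordinate metric. -/
noncomputable def chris {N : ℕ} (g : (Fin N → ℝ) → Matrix (Fin N) (Fin N) ℝ)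
    (μ α β : Fin N) (x : Fin N → ℝ) : ℝ :=
  (1/2) * ∑ ν, (g x)⁻¹ μ ν *
    (pd α (fun y => g y β ν) x + pd β (fun y => g y α ν) x - pd ν (fun y => g y α β) x)

/-- Riemann tensor `R^μ_{ναβ}` of a coordinate metric. -/
noncomputable def riem {N : ℕ} (g : (Fin N → ℝ) → Matrix (Fin N) (Fin N) ℝ)
    (μ ν α β : Fin N) (x : Fin N → ℝ) : ℝ :=
  pd α (chris g μ β ν) x - pd β (chris g μ α ν) x
    + ∑ σ, (chris g μ α σ x * chris g σ β ν x - chris g μ β σ x * chris g σ α ν x)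

/-- Ricci tensor `R_{νβ}` of a coordinate metric. -/
noncomputable def ricci {N : ℕ} (g : (Fin N → ℝ) → Matrix (Fin N) (Fin N) ℝ)
    (ν β : Fin N) (x : Fin N → ℝ) : ℝ :=
  ∑ μ, riem g μ ν μ β x

/-- Scalar curvature of a coordinate metric. -/
noncomputable def scal {N : ℕ} (g : (Fin N → ℝ) → Matrix (Fin N) (Fin N) ℝ)
    (x : Fin N → ℝ) : ℝ :=
  ∑ ν, ∑ β, (g x)⁻¹ ν β * ricci g ν β x

/-- Ricci tensor with first index raised, `R^μ_β`. -/
noncomputable def ricUp {N : ℕ} (g : (Fin N → ℝ) → Matrix (Fin N) (Fin N) ℝ)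
    (μ β : Fin N) (x : Fin N → ℝ) : ℝ :=
  ∑ σ, (g x)⁻¹ μ σ * ricci g σ β x

/-- Weyl tensor `C^μ_{ναβ}` of a coordinate metric on ℝ^N. -/
noncomputable def weyl {N : ℕ} (g : (Fin N → ℝ) → Matrix (Fin N) (Fin N) ℝ)
    (μ ν α β : Fin N) (x : Fin N → ℝ) : ℝ :=
  riem g μ ν α β x
    - (2 / ((N : ℝ) - 2)) *
        ((1/2) * ((if μ = α then (1:ℝ) else 0) * ricci g β ν x
            - (if μ = β then (1:ℝ) else 0) * ricci g α ν x)
          - (1/2) * (g x ν α * ricUp g μ β x - g x ν β * ricUp g μ α x))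
    + (2 * scal g x / (((N : ℝ) - 1) * ((N : ℝ) - 2))) *
        ((1/2) * ((if μ = α then (1:ℝ) else 0) * g x β ν
            - (if μ = β then (1:ℝ) else 0) * g x α ν))

/-- `N(x) = g^{αβ} ∂_αΩ ∂_βΩ`, the squared norm of the gradient of `Ω`. -/
noncomputable def gradSq {N : ℕ} (g : (Fin N → ℝ) → Matrix (Fin N) (Fin N) ℝ)
    (Ω : (Fin N → ℝ) → ℝ) (x : Fin N → ℝ) : ℝ :=
  ∑ α, ∑ β, (g x)⁻¹ α β * pd α Ω x * pd β Ω x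

/-- `ε = sign(N)`. -/
noncomputable def epsn {N : ℕ} (g : (Fin N → ℝ) → Matrix (Fin N) (Fin N) ℝ)
    (Ω : (Fin N → ℝ) → ℝ) (x : Fin N → ℝ) : ℝ :=
  Real.sign (gradSq g Ω x)

/-- `F = |N|^{1/2}`. -/
noncomputable def Ffun {N : ℕ} (g : (Fin N → ℝ) → Matrix (Fin N) (Fin N) ℝ)
    (Ω : (Fin N → ℝ) → ℝ) (x : Fin N → ℝ) : ℝ :=
  Real.sqrt |gradSq g Ω x|

/-- `u_α = F⁻¹ ∂_αΩ`. -/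
noncomputable def uLow {N : ℕ} (g : (Fin N → ℝ) → Matrix (Fin N) (Fin N) ℝ)
    (Ω : (Fin N → ℝ) → ℝ) (α : Fin N) (x : Fin N → ℝ) : ℝ :=
  (Ffun g Ω x)⁻¹ * pd α Ω x

/-- `u^μ = g^{μσ} u_σ`. -/
noncomputable def uUp {N : ℕ} (g : (Fin N → ℝ) → Matrix (Fin N) (Fin N) ℝ)
    (Ω : (Fin N → ℝ) → ℝ) (μ : Fin N) (x : Fin N → ℝ) : ℝ :=
  ∑ σ, (g x)⁻¹ μ σ * uLow g Ω σ x

/-- the projector `h_{αβ} = g_{αβ} - ε u_α u_β`. -/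
noncomputable def hLow {N : ℕ} (g : (Fin N → ℝ) → Matrix (Fin N) (Fin N) ℝ)
    (Ω : (Fin N → ℝ) → ℝ) (α β : Fin N) (x : Fin N → ℝ) : ℝ :=
  g x α β - epsn g Ω x * uLow g Ω α x * uLow g Ω β x

/-- `h^μ_α = g^{μσ} h_{σα}`. -/
noncomputable def hMix {N : ℕ} (g : (Fin N → ℝ) → Matrix (Fin N) (Fin N) ℝ)
    (Ω : (Fin N → ℝ) → ℝ) (μ α : Fin N) (x : Fin N → ℝ) : ℝ :=
  ∑ σ, (g x)⁻¹ μ σ * hLow g Ω σ α x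

/-- `t_{αβ} = q_{μν} h^μ_α h^ν_β`. -/
noncomputable def tLow {N : ℕ} (g q : (Fin N → ℝ) → Matrix (Fin N) (Fin N) ℝ)
    (Ω : (Fin N → ℝ) → ℝ) (α β : Fin N) (x : Fin N → ℝ) : ℝ :=
  ∑ μ, ∑ ν, q x μ ν * hMix g Ω μ α x * hMix g Ω ν β x

/-- `t = g^{αβ} t_{αβ}`. -/
noncomputable def tTr {N : ℕ} (g q : (Fin N → ℝ) → Matrix (Fin N) (Fin N) ℝ)
    (Ω : (Fin N → ℝ) → ℝ) (x : Fin N → ℝ) : ℝ :=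
  ∑ α, ∑ β, (g x)⁻¹ α β * tLow g q Ω α β x

/-- the trace-free part `t̃_{αβ} = t_{αβ} - (t/n) h_{αβ}`, `n` the boundary dimension. -/
noncomputable def ttLow {N : ℕ} (n : ℕ) (g q : (Fin N → ℝ) → Matrix (Fin N) (Fin N) ℝ)
    (Ω : (Fin N → ℝ) → ℝ) (α β : Fin N) (x : Fin N → ℝ) : ℝ :=
  tLow g q Ω α β x - (tTr g q Ω x / (n : ℝ)) * hLow g Ω α β x

/-- `t̃^μ_α = g^{μσ} t̃_{σα}`. -/
noncomputable def ttUp {N : ℕ} (n : ℕ) (g q : (Fin N → ℝ) → Matrix (Fin N) (Fin N) ℝ)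
    (Ω : (Fin N → ℝ) → ℝ) (μ α : Fin N) (x : Fin N → ℝ) : ℝ :=
  ∑ σ, (g x)⁻¹ μ σ * ttLow n g q Ω σ α x

/-- `K_m(Ω) = m(m-1) Ω^{m-2} F²`. -/
noncomputable def Kfun {N : ℕ} (m : ℕ) (g : (Fin N → ℝ) → Matrix (Fin N) (Fin N) ℝ)
    (Ω : (Fin N → ℝ) → ℝ) (x : Fin N → ℝ) : ℝ :=
  (m : ℝ) * ((m : ℝ) - 1) * (Ω x)^(m - 2) * (Ffun g Ω x)^2

/-- The tensor `E^μ_{ναβ}` of Statement 1: the difference of the Weyl tensors of `g` and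
`ĝ` corrected by the explicit `K_m(Ω)`-terms of Lemma 2.4 of the paper. -/
noncomputable def Etensor {N : ℕ} (n m : ℕ)
    (g gh q : (Fin N → ℝ) → Matrix (Fin N) (Fin N) ℝ)
    (Ω : (Fin N → ℝ) → ℝ) (μ ν α β : Fin N) (x : Fin N → ℝ) : ℝ :=
  weyl g μ ν α β x - weyl gh μ ν α β x
    + Kfun m g Ω x * (((n : ℝ) - 2)/((n : ℝ) - 1)) *
        (uUp g Ω μ x * ((1/2) * (uLow g Ω α x * ttLow n g q Ω β ν x
              - uLow g Ω β x * ttLow n g q Ω α ν x))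
          + ((1/2) * (ttUp n g q Ω μ α x * uLow g Ω β x
              - ttUp n g q Ω μ β x * uLow g Ω α x)) * uLow g Ω ν x)
    - (epsn g Ω x * Kfun m g Ω x / ((n : ℝ) - 1)) *
        ((1/2) * (hMix g Ω μ α x * ttLow n g q Ω β ν x
              - hMix g Ω μ β x * ttLow n g q Ω α ν x)
          + (1/2) * (ttUp n g q Ω μ α x * hLow g Ω β ν x
              - ttUp n g q Ω μ β x * hLow g Ω α ν x))

section Layer1
open Filter

variable {N : ℕ}

lemma SOne.cd_dAt {U : Set (Fin N → ℝ)} (hU : IsOpen U) {f : (Fin N → ℝ) → ℝ}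
    (hf : ContDiffOn ℝ 1 f U) {x : Fin N → ℝ} (hx : x ∈ U) : DifferentiableAt ℝ f x :=
  (hf.differentiableOn one_ne_zero).differentiableAt (hU.mem_nhds hx)

lemma SOne.pd_congr {U : Set (Fin N → ℝ)} (hU : IsOpen U) {x : Fin N → ℝ} (hx : x ∈ U)
    {f h : (Fin N → ℝ) → ℝ} (hfh : ∀ y ∈ U, f y = h y) (α : Fin N) :
    pd α f x = pd α h x := by
  unfold pd
  rw [Filter.EventuallyEq.fderiv_eq
    (Filter.eventuallyEq_of_mem (hU.mem_nhds hx) (fun y hy => hfh y hy))]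

lemma SOne.pd_add {f h : (Fin N → ℝ) → ℝ} {x : Fin N → ℝ} {α : Fin N}
    (hf : DifferentiableAt ℝ f x) (hh : DifferentiableAt ℝ h x) :
    pd α (fun y => f y + h y) x = pd α f x + pd α h x := by
  unfold pd; rw [fderiv_fun_add hf hh]; simp

lemma SOne.pd_sub {f h : (Fin N → ℝ) → ℝ} {x : Fin N → ℝ} {α : Fin N}
    (hf : DifferentiableAt ℝ f x) (hh : DifferentiableAt ℝ h x) :
    pd α (fun y => f y - h y) x = pd α f x - pd α h x := by
  unfold pd; rw [fderiv_fun_sub hf hh]; simp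

lemma SOne.pd_mul {f h : (Fin N → ℝ) → ℝ} {x : Fin N → ℝ} {α : Fin N}
    (hf : DifferentiableAt ℝ f x) (hh : DifferentiableAt ℝ h x) :
    pd α (fun y => f y * h y) x = pd α f x * h x + f x * pd α h x := by
  unfold pd; rw [fderiv_fun_mul hf hh]
  simp [ContinuousLinearMap.add_apply, ContinuousLinearMap.smul_apply, smul_eq_mul]
  ring

lemma SOne.pd_sum {ι : Type*} (s : Finset ι) {A : ι → (Fin N → ℝ) → ℝ} {x : Fin N → ℝ}
    {α : Fin N} (h : ∀ i ∈ s, DifferentiableAt ℝ (A i) x) :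
    pd α (fun y => ∑ i ∈ s, A i y) x = ∑ i ∈ s, pd α (A i) x := by
  unfold pd; rw [fderiv_fun_sum h]; simp

lemma SOne.pd_const (c : ℝ) (x : Fin N → ℝ) (α : Fin N) :
    pd α (fun _ => c) x = 0 := by
  unfold pd; simp

lemma SOne.pd_const_mul {h : (Fin N → ℝ) → ℝ} {x : Fin N → ℝ} {α : Fin N}
    (hh : DifferentiableAt ℝ h x) (c : ℝ) :
    pd α (fun y => c * h y) x = c * pd α h x := by
  rw [SOne.pd_mul (differentiableAt_const c) hh, SOne.pd_const]; ring

lemma SOne.pd_pow {Ω : (Fin N → ℝ) → ℝ} {x : Fin N → ℝ} (hΩ : DifferentiableAt ℝ Ω x)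
    (j : ℕ) (α : Fin N) :
    pd α (fun y => Ω y ^ (j+1)) x = ((j:ℝ)+1) * Ω x ^ j * pd α Ω x := by
  induction j with
  | zero => simp only [pow_one, zero_add, Nat.cast_zero, pow_zero]; ring
  | succ j ih =>
    have : (fun y => Ω y ^ (j+2)) = fun y => Ω y ^ (j+1) * Ω y := by
      funext y; rw [pow_succ]
    rw [this, SOne.pd_mul (f := fun y => Ω y ^ (j+1)) (hΩ.pow (j+1)) hΩ, ih, pow_succ]
    push_cast; ring

lemma SOne.pd_pow_mul {Ω ρ : (Fin N → ℝ) → ℝ} {x : Fin N → ℝ}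
    (hΩ : DifferentiableAt ℝ Ω x) (hρ : DifferentiableAt ℝ ρ x) (j : ℕ) (α : Fin N) :
    pd α (fun y => Ω y ^ (j+1) * ρ y) x
      = Ω x ^ j * ((((j:ℝ))+1) * pd α Ω x * ρ x) + Ω x ^ (j+1) * pd α ρ x := by
  rw [SOne.pd_mul (f := fun y => Ω y ^ (j+1)) (hΩ.pow (j+1)) hρ, SOne.pd_pow hΩ j]; ring

lemma SOne.pd_contDiffOn {U : Set (Fin N → ℝ)} (hU : IsOpen U) {f : (Fin N → ℝ) → ℝ}
    (hf : ContDiffOn ℝ 2 f U) (α : Fin N) : ContDiffOn ℝ 1 (pd α f) U := by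
  have h1 : ContDiffOn ℝ 1 (fderiv ℝ f) U := by
    refine hf.fderiv_of_isOpen hU ?_
    norm_num
  exact h1.clm_apply contDiffOn_const

lemma SOne.pd_continuousOn {U : Set (Fin N → ℝ)} (hU : IsOpen U) {f : (Fin N → ℝ) → ℝ}
    (hf : ContDiffOn ℝ 1 f U) (α : Fin N) : ContinuousOn (pd α f) U := by
  have h1 : ContinuousOn (fderiv ℝ f) U := hf.continuousOn_fderiv_of_isOpen hU le_rfl
  exact h1.clm_apply continuousOn_const

end Layer1
noncomputable section
namespace SOne
open Finset

variable {d : ℕ}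

def uU (gi : Matrix (Fin d) (Fin d) ℝ) (u : Fin d → ℝ) (μ : Fin d) : ℝ := ∑ σ, gi μ σ * u σ
def QU (gi Q : Matrix (Fin d) (Fin d) ℝ) (μ b : Fin d) : ℝ := ∑ σ, gi μ σ * Q σ b
def vv (gi Q : Matrix (Fin d) (Fin d) ℝ) (u : Fin d → ℝ) (b : Fin d) : ℝ :=
  ∑ μ, uU gi u μ * Q μ b
def vU (gi Q : Matrix (Fin d) (Fin d) ℝ) (u : Fin d → ℝ) (μ : Fin d) : ℝ :=
  ∑ σ, gi μ σ * vv gi Q u σ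
def sS (gi Q : Matrix (Fin d) (Fin d) ℝ) (u : Fin d → ℝ) : ℝ :=
  ∑ b, vv gi Q u b * uU gi u b
def tau (gi Q : Matrix (Fin d) (Fin d) ℝ) : ℝ := ∑ a, ∑ b, gi a b * Q a b
def hL (G : Matrix (Fin d) (Fin d) ℝ) (u : Fin d → ℝ) (ε : ℝ) (a b : Fin d) : ℝ :=
  G a b - ε * u a * u b
def hM (gi G : Matrix (Fin d) (Fin d) ℝ) (u : Fin d → ℝ) (ε : ℝ) (μ a : Fin d) : ℝ :=
  ∑ σ, gi μ σ * hL G u ε σ a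
def tL (gi G Q : Matrix (Fin d) (Fin d) ℝ) (u : Fin d → ℝ) (ε : ℝ) (a b : Fin d) : ℝ :=
  ∑ μ, ∑ ν, Q μ ν * hM gi G u ε μ a * hM gi G u ε ν b
def tr (gi G Q : Matrix (Fin d) (Fin d) ℝ) (u : Fin d → ℝ) (ε : ℝ) : ℝ :=
  ∑ a, ∑ b, gi a b * tL gi G Q u ε a b
def ttL (nr : ℝ) (gi G Q : Matrix (Fin d) (Fin d) ℝ) (u : Fin d → ℝ) (ε : ℝ) (a b : Fin d) : ℝ :=
  tL gi G Q u ε a b - tr gi G Q u ε / nr * hL G u ε a b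
def ttU (nr : ℝ) (gi G Q : Matrix (Fin d) (Fin d) ℝ) (u : Fin d → ℝ) (ε : ℝ) (μ a : Fin d) : ℝ :=
  ∑ σ, gi μ σ * ttL nr gi G Q u ε σ a
def Lch (gi Q : Matrix (Fin d) (Fin d) ℝ) (u : Fin d → ℝ) (c μ a b : Fin d) : ℝ :=
  (1/2 : ℝ) * u c * ∑ σ, gi μ σ * (u a * Q b σ + u b * Q a σ - u σ * Q a b)
def AA (gi Q : Matrix (Fin d) (Fin d) ℝ) (u : Fin d → ℝ) (μ ν a b : Fin d) : ℝ :=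
  Lch gi Q u a μ b ν - Lch gi Q u b μ a ν
def BB (gi Q : Matrix (Fin d) (Fin d) ℝ) (u : Fin d → ℝ) (β ν : Fin d) : ℝ :=
  ∑ μ, AA gi Q u μ β μ ν
def SS (gi Q : Matrix (Fin d) (Fin d) ℝ) (u : Fin d → ℝ) : ℝ :=
  ∑ ν, ∑ β, gi ν β * BB gi Q u ν β
def BUu (gi Q : Matrix (Fin d) (Fin d) ℝ) (u : Fin d → ℝ) (μ β : Fin d) : ℝ :=
  ∑ σ, gi μ σ * BB gi Q u σ β



lemma sum_comb5 {ι : Type*} [Fintype ι] (c1 c2 c3 c4 c5 : ℝ) (f1 f2 f3 f4 f5 : ι → ℝ) :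
    ∑ i, (c1 * f1 i - c2 * f2 i - c3 * f3 i + c4 * f4 i - c5 * f5 i)
      = c1 * ∑ i, f1 i - c2 * ∑ i, f2 i - c3 * ∑ i, f3 i + c4 * ∑ i, f4 i
        - c5 * ∑ i, f5 i := by
  simp only [Finset.sum_sub_distrib, Finset.sum_add_distrib, Finset.mul_sum]

set_option maxHeartbeats 3000000 in
theorem keyAlg (nr : ℝ) (hn0 : nr ≠ 0) (hn1 : nr - 1 ≠ 0)
    (gi G Q : Matrix (Fin d) (Fin d) ℝ) (u : Fin d → ℝ) (ε : ℝ)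
    (hGsym : ∀ i j, G i j = G j i) (hgisym : ∀ i j, gi i j = gi j i)
    (hQsym : ∀ i j, Q i j = Q j i)
    (hinv : ∀ i j, ∑ σ, gi i σ * G σ j = if i = j then (1:ℝ) else 0)
    (hu : ∑ μ, uU gi u μ * u μ = ε) (hε : ε * ε = 1)
    (μ ν a b : Fin d) :
    AA gi Q u μ ν a b
     - (2/(nr-1)) * ((1/2)*((if μ=a then (1:ℝ) else 0)*BB gi Q u b ν
            - (if μ=b then (1:ℝ) else 0)*BB gi Q u a ν)
         - (1/2)*(G ν a * BUu gi Q u μ b - G ν b * BUu gi Q u μ a))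
     + (2*SS gi Q u/(nr*(nr-1))) * ((1/2)*((if μ=a then (1:ℝ) else 0)*G b ν
            - (if μ=b then (1:ℝ) else 0)*G a ν))
     + ((nr-2)/(nr-1)) * (uU gi u μ * ((1/2)*(u a * ttL nr gi G Q u ε b ν
            - u b * ttL nr gi G Q u ε a ν))
         + ((1/2)*(ttU nr gi G Q u ε μ a * u b - ttU nr gi G Q u ε μ b * u a)) * u ν)
     - (ε/(nr-1)) * ((1/2)*(hM gi G u ε μ a * ttL nr gi G Q u ε b ν
            - hM gi G u ε μ b * ttL nr gi G Q u ε a ν)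
         + (1/2)*(ttU nr gi G Q u ε μ a * hL G u ε b ν
            - ttU nr gi G Q u ε μ b * hL G u ε a ν)) = 0 := by
  -- generic index-swap contraction
  have swap : ∀ (p q : Fin d → ℝ),
      (∑ i, p i * (∑ j, gi i j * q j)) = ∑ j, uU gi p j * q j := by
    intro p q
    calc (∑ i, p i * (∑ j, gi i j * q j)) = ∑ i, ∑ j, p i * (gi i j * q j) := by
          exact Finset.sum_congr rfl fun i _ => Finset.mul_sum _ _ _
      _ = ∑ j, ∑ i, p i * (gi i j * q j) := Finset.sum_comm
      _ = ∑ j, uU gi p j * q j := by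
          refine Finset.sum_congr rfl fun j _ => ?_
          unfold uU
          rw [Finset.sum_mul]
          exact Finset.sum_congr rfl fun i _ => by rw [hgisym i j]; ring
  have euU : ∀ i, (∑ σ, gi i σ * u σ) = uU gi u i := fun _ => rfl
  have evv : ∀ c, (∑ i, uU gi u i * Q i c) = vv gi Q u c := fun _ => rfl
  have evU : ∀ i, (∑ σ, gi i σ * vv gi Q u σ) = vU gi Q u i := fun _ => rfl
  have eQU : ∀ i c, (∑ σ, gi i σ * Q σ c) = QU gi Q i c := fun _ _ => rfl
  have esS : (∑ i, vv gi Q u i * uU gi u i) = sS gi Q u := rfl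
  have hLch : ∀ c' μ' a' b', Lch gi Q u c' μ' a' b'
      = 1/2 * u c' * (u a' * QU gi Q μ' b' + u b' * QU gi Q μ' a' - uU gi u μ' * Q a' b') := by
    intro c' μ' a' b'
    unfold Lch
    congr 1
    calc ∑ σ, gi μ' σ * (u a' * Q b' σ + u b' * Q a' σ - u σ * Q a' b')
        = ∑ σ, (u a' * (gi μ' σ * Q σ b') - 0 * (gi μ' σ * Q σ b')
            - Q a' b' * (gi μ' σ * u σ) + u b' * (gi μ' σ * Q σ a')
            - 0 * (gi μ' σ * Q σ b')) := by
          refine Finset.sum_congr rfl fun σ _ => ?_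
          rw [hQsym b' σ, hQsym a' σ]; ring
      _ = u a' * (∑ σ, gi μ' σ * Q σ b') - 0 * (∑ σ, gi μ' σ * Q σ b')
            - Q a' b' * (∑ σ, gi μ' σ * u σ) + u b' * (∑ σ, gi μ' σ * Q σ a')
            - 0 * (∑ σ, gi μ' σ * Q σ b') := sum_comb5 _ _ _ _ _ _ _ _ _ _
      _ = u a' * QU gi Q μ' b' + u b' * QU gi Q μ' a' - uU gi u μ' * Q a' b' := by
          rw [eQU, eQU, euU]; ring
  have hAA : ∀ μ' ν' a' b', AA gi Q u μ' ν' a' b'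
      = 1/2 * (u a' * u ν' * QU gi Q μ' b' - u a' * uU gi u μ' * Q b' ν'
          - u b' * u ν' * QU gi Q μ' a' + u b' * uU gi u μ' * Q a' ν') := by
    intro μ' ν' a' b'
    unfold AA; rw [hLch, hLch]; ring
  -- contractions with u
  have hsum_uQU : ∀ c, (∑ i, u i * QU gi Q i c) = vv gi Q u c := by
    intro c
    unfold QU
    rw [swap u (fun σ => Q σ c)]
    rfl
  have hsum_uvU : (∑ i, u i * vU gi Q u i) = sS gi Q u := by
    unfold vU
    rw [swap u (vv gi Q u)]
    rw [← esS]
    exact Finset.sum_congr rfl fun j _ => mul_comm _ _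
  have hsum_uuU : (∑ i, u i * uU gi u i) = ε := by
    rw [← hu]; exact Finset.sum_congr rfl fun i _ => mul_comm _ _
  have hsum_QUdiag : (∑ i, QU gi Q i i) = tau gi Q := by
    unfold QU tau
    refine Finset.sum_congr rfl fun i _ => Finset.sum_congr rfl fun σ _ => ?_
    rw [hQsym σ i]
  have hsum_uUvv : (∑ i, uU gi u i * vv gi Q u i) = sS gi Q u := by
    rw [← esS]; exact Finset.sum_congr rfl fun i _ => mul_comm _ _
  -- Ricci-lead
  have hBB : ∀ β' ν', BB gi Q u β' ν'
      = 1/2 * (u β' * vv gi Q u ν' - ε * Q β' ν' - u ν' * u β' * tau gi Q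
          + u ν' * vv gi Q u β') := by
    intro β' ν'
    unfold BB
    calc (∑ μ', AA gi Q u μ' β' μ' ν')
        = ∑ μ', ((u β'/2) * (u μ' * QU gi Q μ' ν') - (Q ν' β'/2) * (u μ' * uU gi u μ')
            - (u ν' * u β' / 2) * QU gi Q μ' μ' + (u ν' / 2) * (uU gi u μ' * Q μ' β')
            - 0 * (u μ' * QU gi Q μ' ν')) := by
          refine Finset.sum_congr rfl fun μ' _ => by rw [hAA]; ring
      _ = (u β'/2) * (∑ μ', u μ' * QU gi Q μ' ν') - (Q ν' β'/2) * (∑ μ', u μ' * uU gi u μ')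
            - (u ν' * u β' / 2) * (∑ μ', QU gi Q μ' μ')
            + (u ν' / 2) * (∑ μ', uU gi u μ' * Q μ' β')
            - 0 * (∑ μ', u μ' * QU gi Q μ' ν') := sum_comb5 _ _ _ _ _ _ _ _ _ _
      _ = 1/2 * (u β' * vv gi Q u ν' - ε * Q β' ν' - u ν' * u β' * tau gi Q
            + u ν' * vv gi Q u β') := by
          rw [hsum_uQU, hsum_uuU, hsum_QUdiag, evv, hQsym ν' β']; ring
  -- scalar-lead
  have hSSinner : ∀ ν', (∑ β', gi ν' β' * BB gi Q u ν' β')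
      = (1/2) * (u ν' * vU gi Q u ν') - (ε/2) * (∑ β', gi ν' β' * Q ν' β')
        - (tau gi Q/2) * (u ν' * uU gi u ν') + (1/2) * (uU gi u ν' * vv gi Q u ν') := by
    intro ν'
    calc (∑ β', gi ν' β' * BB gi Q u ν' β')
        = ∑ β', ((u ν'/2) * (gi ν' β' * vv gi Q u β') - (ε/2) * (gi ν' β' * Q ν' β')
            - (tau gi Q/2 * u ν') * (gi ν' β' * u β')
            + (vv gi Q u ν'/2) * (gi ν' β' * u β')
            - 0 * (gi ν' β' * u β')) := by
          refine Finset.sum_congr rfl fun β' _ => by rw [hBB]; ring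
      _ = (u ν'/2) * (∑ β', gi ν' β' * vv gi Q u β') - (ε/2) * (∑ β', gi ν' β' * Q ν' β')
            - (tau gi Q/2 * u ν') * (∑ β', gi ν' β' * u β')
            + (vv gi Q u ν'/2) * (∑ β', gi ν' β' * u β')
            - 0 * (∑ β', gi ν' β' * u β') := sum_comb5 _ _ _ _ _ _ _ _ _ _
      _ = _ := by rw [evU, euU]; ring
  have hSS : SS gi Q u = sS gi Q u - ε * tau gi Q := by
    unfold SS
    calc (∑ ν', ∑ β', gi ν' β' * BB gi Q u ν' β')
        = ∑ ν', ((1/2) * (u ν' * vU gi Q u ν') - (ε/2) * (∑ β', gi ν' β' * Q ν' β')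
            - (tau gi Q/2) * (u ν' * uU gi u ν') + (1/2) * (uU gi u ν' * vv gi Q u ν')
            - 0 * (u ν' * vU gi Q u ν')) := by
          refine Finset.sum_congr rfl fun ν' _ => by rw [hSSinner]; ring
      _ = (1/2) * (∑ ν', u ν' * vU gi Q u ν')
            - (ε/2) * (∑ ν', ∑ β', gi ν' β' * Q ν' β')
            - (tau gi Q/2) * (∑ ν', u ν' * uU gi u ν')
            + (1/2) * (∑ ν', uU gi u ν' * vv gi Q u ν')
            - 0 * (∑ ν', u ν' * vU gi Q u ν') := sum_comb5 _ _ _ _ _ _ _ _ _ _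
      _ = sS gi Q u - ε * tau gi Q := by
          rw [hsum_uvU, hsum_uuU, hsum_uUvv]
          have e3 : (∑ ν', ∑ β', gi ν' β' * Q ν' β') = tau gi Q := rfl
          rw [e3]; ring
  -- raised Ricci-lead
  have hBU : ∀ μ' β', BUu gi Q u μ' β'
      = 1/2 * (uU gi u μ' * vv gi Q u β' - ε * QU gi Q μ' β'
          - u β' * tau gi Q * uU gi u μ' + u β' * vU gi Q u μ') := by
    intro μ' β'
    unfold BUu
    calc (∑ σ, gi μ' σ * BB gi Q u σ β')
        = ∑ σ, ((vv gi Q u β'/2) * (gi μ' σ * u σ) - (ε/2) * (gi μ' σ * Q σ β')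
            - (u β' * tau gi Q / 2) * (gi μ' σ * u σ)
            + (u β' / 2) * (gi μ' σ * vv gi Q u σ)
            - 0 * (gi μ' σ * u σ)) := by
          refine Finset.sum_congr rfl fun σ _ => by rw [hBB]; ring
      _ = (vv gi Q u β'/2) * (∑ σ, gi μ' σ * u σ) - (ε/2) * (∑ σ, gi μ' σ * Q σ β')
            - (u β' * tau gi Q / 2) * (∑ σ, gi μ' σ * u σ)
            + (u β' / 2) * (∑ σ, gi μ' σ * vv gi Q u σ)
            - 0 * (∑ σ, gi μ' σ * u σ) := sum_comb5 _ _ _ _ _ _ _ _ _ _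
      _ = _ := by rw [euU, eQU, evU]; ring
  -- projector components
  have hhM : ∀ i j, hM gi G u ε i j = (if i = j then (1:ℝ) else 0) - ε * uU gi u i * u j := by
    intro i j
    unfold hM hL
    calc (∑ σ, gi i σ * (G σ j - ε * u σ * u j))
        = ∑ σ, (1 * (gi i σ * G σ j) - (ε * u j) * (gi i σ * u σ)
            - 0 * (gi i σ * u σ) + 0 * (gi i σ * u σ) - 0 * (gi i σ * u σ)) := by
          refine Finset.sum_congr rfl fun σ _ => by ring
      _ = 1 * (∑ σ, gi i σ * G σ j) - (ε * u j) * (∑ σ, gi i σ * u σ)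
            - 0 * (∑ σ, gi i σ * u σ) + 0 * (∑ σ, gi i σ * u σ)
            - 0 * (∑ σ, gi i σ * u σ) := sum_comb5 _ _ _ _ _ _ _ _ _ _
      _ = _ := by rw [hinv i j, euU]; ring
  -- t_{ab}
  have hQhM : ∀ μ' b', (∑ ν', Q μ' ν' * hM gi G u ε ν' b')
      = Q μ' b' - ε * u b' * vv gi Q u μ' := by
    intro μ' b'
    calc (∑ ν', Q μ' ν' * hM gi G u ε ν' b')
        = ∑ ν', (1 * (if ν' = b' then Q ν' μ' else 0)
            - (ε * u b') * (uU gi u ν' * Q ν' μ')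
            - 0 * (uU gi u ν' * Q ν' μ') + 0 * (uU gi u ν' * Q ν' μ')
            - 0 * (uU gi u ν' * Q ν' μ')) := by
          refine Finset.sum_congr rfl fun ν' _ => ?_
          rw [hhM, hQsym μ' ν']; split_ifs <;> ring
      _ = 1 * (∑ ν', if ν' = b' then Q ν' μ' else 0)
            - (ε * u b') * (∑ ν', uU gi u ν' * Q ν' μ')
            - 0 * (∑ ν', uU gi u ν' * Q ν' μ') + 0 * (∑ ν', uU gi u ν' * Q ν' μ')
            - 0 * (∑ ν', uU gi u ν' * Q ν' μ') := sum_comb5 _ _ _ _ _ _ _ _ _ _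
      _ = Q μ' b' - ε * u b' * vv gi Q u μ' := by
          rw [Finset.sum_ite_eq', evv]
          simp only [Finset.mem_univ, if_true]
          rw [hQsym b' μ']; ring
  have htL : ∀ a' b', tL gi G Q u ε a' b'
      = Q a' b' - ε * u b' * vv gi Q u a' - ε * u a' * vv gi Q u b'
        + u a' * u b' * sS gi Q u := by
    intro a' b'
    unfold tL
    calc (∑ μ', ∑ ν', Q μ' ν' * hM gi G u ε μ' a' * hM gi G u ε ν' b')
        = ∑ μ', hM gi G u ε μ' a' * (∑ ν', Q μ' ν' * hM gi G u ε ν' b') := by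
          refine Finset.sum_congr rfl fun μ' _ => ?_
          rw [Finset.mul_sum]
          exact Finset.sum_congr rfl fun ν' _ => by ring
      _ = ∑ μ', (1 * (if μ' = a' then (Q μ' b' - ε * u b' * vv gi Q u μ') else 0)
            - (ε * u a') * (uU gi u μ' * Q μ' b')
            - 0 * (uU gi u μ' * Q μ' b')
            + (ε * ε * (u a' * u b')) * (uU gi u μ' * vv gi Q u μ')
            - 0 * (uU gi u μ' * Q μ' b')) := by
          refine Finset.sum_congr rfl fun μ' _ => ?_
          rw [hQhM, hhM]; split_ifs <;> ring
      _ = 1 * (∑ μ', if μ' = a' then (Q μ' b' - ε * u b' * vv gi Q u μ') else 0)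
            - (ε * u a') * (∑ μ', uU gi u μ' * Q μ' b')
            - 0 * (∑ μ', uU gi u μ' * Q μ' b')
            + (ε * ε * (u a' * u b')) * (∑ μ', uU gi u μ' * vv gi Q u μ')
            - 0 * (∑ μ', uU gi u μ' * Q μ' b') := sum_comb5 _ _ _ _ _ _ _ _ _ _
      _ = _ := by
          rw [Finset.sum_ite_eq', evv, hsum_uUvv, hε]
          simp only [Finset.mem_univ, if_true]
          ring
  -- trace of t
  have htrinner : ∀ a', (∑ b', gi a' b' * tL gi G Q u ε a' b')
      = QU gi Q a' a'
        - (ε * vv gi Q u a') * uU gi u a' - ε * (u a' * vU gi Q u a')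
        + (sS gi Q u * u a') * uU gi u a' := by
    intro a'
    calc (∑ b', gi a' b' * tL gi G Q u ε a' b')
        = ∑ b', (1 * (gi a' b' * Q a' b')
            - (ε * vv gi Q u a') * (gi a' b' * u b')
            - ε * (u a' * (gi a' b' * vv gi Q u b'))
            + (sS gi Q u * u a') * (gi a' b' * u b')
            - 0 * (gi a' b' * u b')) := by
          refine Finset.sum_congr rfl fun b' _ => by rw [htL]; ring
      _ = 1 * (∑ b', gi a' b' * Q a' b')
            - (ε * vv gi Q u a') * (∑ b', gi a' b' * u b')
            - ε * (∑ b', u a' * (gi a' b' * vv gi Q u b'))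
            + (sS gi Q u * u a') * (∑ b', gi a' b' * u b')
            - 0 * (∑ b', gi a' b' * u b') := sum_comb5 _ _ _ _ _ _ _ _ _ _
      _ = _ := by
          rw [euU]
          rw [show (∑ b', u a' * (gi a' b' * vv gi Q u b'))
              = u a' * ∑ b', gi a' b' * vv gi Q u b' from (Finset.mul_sum _ _ _).symm]
          rw [evU]
          rw [show (∑ b', gi a' b' * Q a' b')
              = ∑ b', gi a' b' * Q b' a' from
            Finset.sum_congr rfl fun b' _ => by rw [hQsym a' b']]
          rw [eQU]
          ring
  have htr : tr gi G Q u ε = tau gi Q - ε * sS gi Q u := by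
    unfold tr
    calc (∑ a', ∑ b', gi a' b' * tL gi G Q u ε a' b')
        = ∑ a', (1 * QU gi Q a' a'
            - ε * (vv gi Q u a' * uU gi u a') - ε * (u a' * vU gi Q u a')
            + sS gi Q u * (u a' * uU gi u a')
            - 0 * QU gi Q a' a') := by
          refine Finset.sum_congr rfl fun a' _ => by rw [htrinner]; ring
      _ = 1 * (∑ a', QU gi Q a' a')
            - ε * (∑ a', vv gi Q u a' * uU gi u a') - ε * (∑ a', u a' * vU gi Q u a')
            + sS gi Q u * (∑ a', u a' * uU gi u a')
            - 0 * (∑ a', QU gi Q a' a') := sum_comb5 _ _ _ _ _ _ _ _ _ _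
      _ = _ := by rw [hsum_QUdiag, esS, hsum_uvU, hsum_uuU]; ring
  -- trace-free part raised
  have httU : ∀ μ' a', ttU nr gi G Q u ε μ' a'
      = QU gi Q μ' a' - ε * u a' * vU gi Q u μ' - ε * vv gi Q u a' * uU gi u μ'
        + sS gi Q u * u a' * uU gi u μ'
        - tr gi G Q u ε / nr * hM gi G u ε μ' a' := by
    intro μ' a'
    unfold ttU ttL
    calc (∑ σ, gi μ' σ * (tL gi G Q u ε σ a' - tr gi G Q u ε / nr * hL G u ε σ a'))
        = ∑ σ, (1 * (gi μ' σ * Q σ a')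
            - (ε * u a') * (gi μ' σ * vv gi Q u σ)
            - (ε * vv gi Q u a') * (gi μ' σ * u σ)
            + (sS gi Q u * u a') * (gi μ' σ * u σ)
            - (tr gi G Q u ε / nr) * (gi μ' σ * hL G u ε σ a')) := by
          refine Finset.sum_congr rfl fun σ _ => by rw [htL]; ring
      _ = 1 * (∑ σ, gi μ' σ * Q σ a')
            - (ε * u a') * (∑ σ, gi μ' σ * vv gi Q u σ)
            - (ε * vv gi Q u a') * (∑ σ, gi μ' σ * u σ)
            + (sS gi Q u * u a') * (∑ σ, gi μ' σ * u σ)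
            - (tr gi G Q u ε / nr) * (∑ σ, gi μ' σ * hL G u ε σ a') :=
          sum_comb5 _ _ _ _ _ _ _ _ _ _
      _ = _ := by
          rw [eQU, evU, euU]
          have ehM : (∑ σ, gi μ' σ * hL G u ε σ a') = hM gi G u ε μ' a' := rfl
          rw [ehM]; ring
  -- final assembly
  rw [hAA μ ν a b, hBB b ν, hBB a ν, hSS, hBU μ b, hBU μ a, httU μ a, httU μ b,
    hhM μ a, hhM μ b]
  unfold ttL
  rw [htL b ν, htL a ν, htr]
  unfold hL
  rw [hGsym ν a, hGsym ν b]
  rcases mul_self_eq_one_iff.mp hε with h1 | h1 <;> subst h1 <;>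
  · generalize (if μ = a then (1:ℝ) else 0) = d1
    generalize (if μ = b then (1:ℝ) else 0) = d2
    generalize uU gi u μ = w1
    generalize vU gi Q u μ = w2
    generalize QU gi Q μ a = w3
    generalize QU gi Q μ b = w4
    generalize vv gi Q u a = w5
    generalize vv gi Q u b = w6
    generalize vv gi Q u ν = w7
    generalize tau gi Q = w8
    generalize sS gi Q u = w9
    generalize u a = w10
    generalize u b = w11
    generalize u ν = w12
    generalize Q b ν = w13
    generalize Q a ν = w14
    generalize G b ν = w15
    generalize G a ν = w16
    field_simp
    ring

end SOne
end
section Layer3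
open Finset

variable {N : ℕ} {U : Set (Fin N → ℝ)}

lemma SOne.cdo_prod {ι : Type*} (s : Finset ι) (f : ι → (Fin N → ℝ) → ℝ)
    (h : ∀ i ∈ s, ContDiffOn ℝ 2 (f i) U) :
    ContDiffOn ℝ 2 (fun x => ∏ i ∈ s, f i x) U := by
  classical
  induction s using Finset.induction with
  | empty => simpa using contDiffOn_const
  | @insert i s hni ih =>
    have : (fun x => ∏ j ∈ insert i s, f j x) = fun x => f i x * ∏ j ∈ s, f j x := by
      funext x; rw [Finset.prod_insert hni]
    rw [this]
    exact (h i (Finset.mem_insert_self i s)).mul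
      (ih fun j hj => h j (Finset.mem_insert_of_mem hj))

lemma SOne.detC2 {A : (Fin N → ℝ) → Matrix (Fin N) (Fin N) ℝ}
    (hA : ∀ a b, ContDiffOn ℝ 2 (fun x => A x a b) U) :
    ContDiffOn ℝ 2 (fun x => (A x).det) U := by
  have : (fun x => (A x).det)
      = fun x => ∑ σ : Equiv.Perm (Fin N), ((Equiv.Perm.sign σ : ℤ) : ℝ) * ∏ i, A x (σ i) i := by
    funext x
    rw [Matrix.det_apply]
    exact Finset.sum_congr rfl fun σ _ => by
      rw [Units.smul_def, zsmul_eq_mul]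
  rw [this]
  exact ContDiffOn.sum fun σ _ =>
    contDiffOn_const.mul (SOne.cdo_prod Finset.univ _ fun i _ => hA (σ i) i)

lemma SOne.adjC2 {A : (Fin N → ℝ) → Matrix (Fin N) (Fin N) ℝ}
    (hA : ∀ a b, ContDiffOn ℝ 2 (fun x => A x a b) U) (μ ν : Fin N) :
    ContDiffOn ℝ 2 (fun x => (A x).adjugate μ ν) U := by
  have : (fun x => (A x).adjugate μ ν)
      = fun x => ((A x).updateRow ν (Pi.single μ 1)).det := by
    funext x; rw [Matrix.adjugate_apply]
  rw [this]
  refine SOne.detC2 fun a b => ?_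
  rcases eq_or_ne a ν with h | h
  · have : (fun x => (A x).updateRow ν (Pi.single μ 1) a b) = fun _ : Fin N → ℝ => ((Pi.single μ 1 : Fin N → ℝ) b) := by
      funext x; rw [Matrix.updateRow_apply, if_pos h]
    rw [this]; exact contDiffOn_const
  · have : (fun x => (A x).updateRow ν (Pi.single μ 1) a b) = fun x => A x a b := by
      funext x; rw [Matrix.updateRow_apply, if_neg h]
    rw [this]; exact hA a b

lemma SOne.invC2 {A : (Fin N → ℝ) → Matrix (Fin N) (Fin N) ℝ}
    (hA : ∀ a b, ContDiffOn ℝ 2 (fun x => A x a b) U)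
    (hinv : ∀ x ∈ U, IsUnit (A x)) (μ ν : Fin N) :
    ContDiffOn ℝ 2 (fun x => (A x)⁻¹ μ ν) U := by
  have hne : ∀ x ∈ U, (A x).det ≠ 0 := fun x hx =>
    isUnit_iff_ne_zero.mp ((Matrix.isUnit_iff_isUnit_det _).mp (hinv x hx))
  have : (fun x => (A x)⁻¹ μ ν) = fun x => ((A x).det)⁻¹ * (A x).adjugate μ ν := by
    funext x
    rw [Matrix.inv_def, Matrix.smul_apply, Ring.inverse_eq_inv', smul_eq_mul]
  rw [this]
  exact ((SOne.detC2 hA).inv hne).mul (SOne.adjC2 hA μ ν)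

end Layer3
noncomputable section Layer4
open Finset

namespace SOne

variable {N : ℕ}

/-- `T_{ν a b} = ∂_a g_{bν} + ∂_b g_{aν} - ∂_ν g_{ab}`. -/
def TT (g : (Fin N → ℝ) → Matrix (Fin N) (Fin N) ℝ) (ν a b : Fin N) (x : Fin N → ℝ) : ℝ :=
  pd a (fun y => g y b ν) x + pd b (fun y => g y a ν) x - pd ν (fun y => g y a b) x

lemma chris_eq (g : (Fin N → ℝ) → Matrix (Fin N) (Fin N) ℝ) (μ a b : Fin N) (x : Fin N → ℝ) :
    chris g μ a b x = (1/2) * ∑ ν, (g x)⁻¹ μ ν * TT g ν a b x := rfl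

def phiD (q : (Fin N → ℝ) → Matrix (Fin N) (Fin N) ℝ) (Ω : (Fin N → ℝ) → ℝ) (k : ℕ)
    (c β ν : Fin N) (x : Fin N → ℝ) : ℝ :=
  ((k:ℝ)+2) * pd c Ω x * q x β ν + Ω x * pd c (fun y => q y β ν) x

def psiD (q : (Fin N → ℝ) → Matrix (Fin N) (Fin N) ℝ) (Ω : (Fin N → ℝ) → ℝ) (k : ℕ)
    (ν a b : Fin N) (x : Fin N → ℝ) : ℝ :=
  phiD q Ω k a b ν x + phiD q Ω k b a ν x - phiD q Ω k ν a b x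

def chiD (g gh q : (Fin N → ℝ) → Matrix (Fin N) (Fin N) ℝ) (μ ν : Fin N) (x : Fin N → ℝ) : ℝ :=
  -∑ j, ∑ i, (g x)⁻¹ μ i * q x i j * (gh x)⁻¹ j ν

def gamD (g gh q : (Fin N → ℝ) → Matrix (Fin N) (Fin N) ℝ) (Ω : (Fin N → ℝ) → ℝ) (k : ℕ)
    (μ a b : Fin N) (x : Fin N → ℝ) : ℝ :=
  (1/2) * ∑ ν, (Ω x * chiD g gh q μ ν x * TT gh ν a b x + (g x)⁻¹ μ ν * psiD q Ω k ν a b x)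

def gamL (g q : (Fin N → ℝ) → Matrix (Fin N) (Fin N) ℝ) (Ω : (Fin N → ℝ) → ℝ) (k : ℕ)
    (μ a b : Fin N) (x : Fin N → ℝ) : ℝ :=
  ((k:ℝ)+2) * ((1/2) * ∑ ν, (g x)⁻¹ μ ν *
    (pd a Ω x * q x b ν + pd b Ω x * q x a ν - pd ν Ω x * q x a b))

def gamR (g gh q : (Fin N → ℝ) → Matrix (Fin N) (Fin N) ℝ) (Ω : (Fin N → ℝ) → ℝ)
    (μ a b : Fin N) (x : Fin N → ℝ) : ℝ :=
  (1/2) * ∑ ν, (chiD g gh q μ ν x * TT gh ν a b x + (g x)⁻¹ μ ν *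
    (pd a (fun y => q y b ν) x + pd b (fun y => q y a ν) x - pd ν (fun y => q y a b) x))

/-- split of `gamD` into leading and `Ω`-remainder parts (pure algebra). -/
lemma gamD_split (g gh q : (Fin N → ℝ) → Matrix (Fin N) (Fin N) ℝ) (Ω : (Fin N → ℝ) → ℝ)
    (k : ℕ) (μ a b : Fin N) (x : Fin N → ℝ) :
    gamD g gh q Ω k μ a b x = gamL g q Ω k μ a b x + Ω x * gamR g gh q Ω μ a b x := by
  unfold gamD gamL gamR
  rw [show (∑ ν, (Ω x * chiD g gh q μ ν x * TT gh ν a b x + (g x)⁻¹ μ ν * psiD q Ω k ν a b x))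
      = ∑ ν, ((((k:ℝ)+2)) * ((g x)⁻¹ μ ν *
            (pd a Ω x * q x b ν + pd b Ω x * q x a ν - pd ν Ω x * q x a b))
          + Ω x * (chiD g gh q μ ν x * TT gh ν a b x + (g x)⁻¹ μ ν *
            (pd a (fun y => q y b ν) x + pd b (fun y => q y a ν) x - pd ν (fun y => q y a b) x)))
      from Finset.sum_congr rfl fun ν _ => by unfold psiD phiD; ring]
  rw [Finset.sum_add_distrib, ← Finset.mul_sum, ← Finset.mul_sum]
  ring

section Reg
variable {U : Set (Fin N → ℝ)} (hU : IsOpen U)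
include hU
variable {g gh q : (Fin N → ℝ) → Matrix (Fin N) (Fin N) ℝ} {Ω : (Fin N → ℝ) → ℝ}

lemma TT_C1 (hgC : ∀ a b, ContDiffOn ℝ 2 (fun x => g x a b) U) (ν a b : Fin N) :
    ContDiffOn ℝ 1 (TT g ν a b) U :=
  ((pd_contDiffOn hU (hgC b ν) a).add (pd_contDiffOn hU (hgC a ν) b)).sub
    (pd_contDiffOn hU (hgC a b) ν)

lemma chris_C1 (hgC : ∀ a b, ContDiffOn ℝ 2 (fun x => g x a b) U)
    (hginv : ∀ x ∈ U, IsUnit (g x)) (μ a b : Fin N) :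
    ContDiffOn ℝ 1 (chris g μ a b) U := by
  have : chris g μ a b = fun x => (1/2) * ∑ ν, (g x)⁻¹ μ ν * TT g ν a b x := rfl
  rw [this]
  exact contDiffOn_const.mul (ContDiffOn.sum fun ν _ =>
    ((invC2 hgC hginv μ ν).of_le one_le_two).mul (TT_C1 hU hgC ν a b))

lemma riem_cont (hgC : ∀ a b, ContDiffOn ℝ 2 (fun x => g x a b) U)
    (hginv : ∀ x ∈ U, IsUnit (g x)) (μ ν a b : Fin N) :
    ContinuousOn (riem g μ ν a b) U := by
  have : riem g μ ν a b = fun x => pd a (chris g μ b ν) x - pd b (chris g μ a ν) x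
      + ∑ σ, (chris g μ a σ x * chris g σ b ν x - chris g μ b σ x * chris g σ a ν x) := rfl
  rw [this]
  refine ContinuousOn.add ?_ ?_
  · exact (pd_continuousOn hU (chris_C1 hU hgC hginv μ b ν) a).sub
      (pd_continuousOn hU (chris_C1 hU hgC hginv μ a ν) b)
  · refine continuousOn_finset_sum _ fun σ _ => ContinuousOn.sub ?_ ?_
    · exact ((chris_C1 hU hgC hginv μ a σ).continuousOn).mul
        ((chris_C1 hU hgC hginv σ b ν).continuousOn)
    · exact ((chris_C1 hU hgC hginv μ b σ).continuousOn).mul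
        ((chris_C1 hU hgC hginv σ a ν).continuousOn)

lemma ricci_cont (hgC : ∀ a b, ContDiffOn ℝ 2 (fun x => g x a b) U)
    (hginv : ∀ x ∈ U, IsUnit (g x)) (ν b : Fin N) :
    ContinuousOn (ricci g ν b) U := by
  have : ricci g ν b = fun x => ∑ μ, riem g μ ν μ b x := rfl
  rw [this]
  exact continuousOn_finset_sum _ fun μ _ => riem_cont hU hgC hginv μ ν μ b

lemma ricUp_cont (hgC : ∀ a b, ContDiffOn ℝ 2 (fun x => g x a b) U)
    (hginv : ∀ x ∈ U, IsUnit (g x)) (μ b : Fin N) :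
    ContinuousOn (ricUp g μ b) U := by
  have : ricUp g μ b = fun x => ∑ σ, (g x)⁻¹ μ σ * ricci g σ b x := rfl
  rw [this]
  exact continuousOn_finset_sum _ fun σ _ =>
    ((invC2 hgC hginv μ σ).continuousOn).mul (ricci_cont hU hgC hginv σ b)

lemma scal_cont (hgC : ∀ a b, ContDiffOn ℝ 2 (fun x => g x a b) U)
    (hginv : ∀ x ∈ U, IsUnit (g x)) :
    ContinuousOn (scal g) U := by
  have : scal g = fun x => ∑ ν, ∑ b, (g x)⁻¹ ν b * ricci g ν b x := rfl
  rw [this]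
  exact continuousOn_finset_sum _ fun ν _ => continuousOn_finset_sum _ fun b _ =>
    ((invC2 hgC hginv ν b).continuousOn).mul (ricci_cont hU hgC hginv ν b)

lemma chiD_cont (hgC : ∀ a b, ContDiffOn ℝ 2 (fun x => g x a b) U)
    (hghC : ∀ a b, ContDiffOn ℝ 2 (fun x => gh x a b) U)
    (hqC : ∀ a b, ContDiffOn ℝ 2 (fun x => q x a b) U)
    (hginv : ∀ x ∈ U, IsUnit (g x)) (hghinv : ∀ x ∈ U, IsUnit (gh x)) (μ ν : Fin N) :
    ContDiffOn ℝ 1 (chiD g gh q μ ν) U := by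
  have : chiD g gh q μ ν = fun x =>
      -∑ j, ∑ i, (g x)⁻¹ μ i * q x i j * (gh x)⁻¹ j ν := rfl
  rw [this]
  refine ContDiffOn.neg (ContDiffOn.sum fun j _ => ContDiffOn.sum fun i _ => ?_)
  exact (((invC2 hgC hginv μ i).of_le one_le_two).mul ((hqC i j).of_le one_le_two)).mul
    ((invC2 hghC hghinv j ν).of_le one_le_two)

lemma gamD_C1 (hΩ : ContDiffOn ℝ 2 Ω U)
    (hgC : ∀ a b, ContDiffOn ℝ 2 (fun x => g x a b) U)
    (hghC : ∀ a b, ContDiffOn ℝ 2 (fun x => gh x a b) U)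
    (hqC : ∀ a b, ContDiffOn ℝ 2 (fun x => q x a b) U)
    (hginv : ∀ x ∈ U, IsUnit (g x)) (hghinv : ∀ x ∈ U, IsUnit (gh x)) (k : ℕ) (μ a b : Fin N) :
    ContDiffOn ℝ 1 (gamD g gh q Ω k μ a b) U := by
  have hΩ1 : ContDiffOn ℝ 1 Ω U := hΩ.of_le one_le_two
  have : gamD g gh q Ω k μ a b = fun x =>
      (1/2) * ∑ ν, (Ω x * chiD g gh q μ ν x * TT gh ν a b x
        + (g x)⁻¹ μ ν * psiD q Ω k ν a b x) := rfl
  rw [this]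
  refine contDiffOn_const.mul (ContDiffOn.sum fun ν _ => ContDiffOn.add ?_ ?_)
  · exact (hΩ1.mul (chiD_cont hU hgC hghC hqC hginv hghinv μ ν)).mul (TT_C1 hU hghC ν a b)
  · refine ((invC2 hgC hginv μ ν).of_le one_le_two).mul ?_
    have hphi : ∀ c β ν', ContDiffOn ℝ 1 (phiD q Ω k c β ν') U := by
      intro c β ν'
      have : phiD q Ω k c β ν' = fun x =>
          ((k:ℝ)+2) * pd c Ω x * q x β ν' + Ω x * pd c (fun y => q y β ν') x := rfl
      rw [this]
      exact ((contDiffOn_const.mul (pd_contDiffOn hU hΩ c)).mul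
        ((hqC β ν').of_le one_le_two)).add (hΩ1.mul (pd_contDiffOn hU (hqC β ν') c))
    have : psiD q Ω k ν a b = fun x => phiD q Ω k a b ν x + phiD q Ω k b a ν x
        - phiD q Ω k ν a b x := rfl
    rw [this]
    exact ((hphi a b ν).add (hphi b a ν)).sub (hphi ν a b)

lemma gamR_cont (hΩ : ContDiffOn ℝ 2 Ω U)
    (hgC : ∀ a b, ContDiffOn ℝ 2 (fun x => g x a b) U)
    (hghC : ∀ a b, ContDiffOn ℝ 2 (fun x => gh x a b) U)
    (hqC : ∀ a b, ContDiffOn ℝ 2 (fun x => q x a b) U)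
    (hginv : ∀ x ∈ U, IsUnit (g x)) (hghinv : ∀ x ∈ U, IsUnit (gh x)) (μ a b : Fin N) :
    ContinuousOn (gamR g gh q Ω μ a b) U := by
  have : gamR g gh q Ω μ a b = fun x =>
      (1/2) * ∑ ν, (chiD g gh q μ ν x * TT gh ν a b x + (g x)⁻¹ μ ν *
        (pd a (fun y => q y b ν) x + pd b (fun y => q y a ν) x - pd ν (fun y => q y a b) x)) := rfl
  rw [this]
  refine continuousOn_const.mul (continuousOn_finset_sum _ fun ν _ => ContinuousOn.add ?_ ?_)
  · exact ((chiD_cont hU hgC hghC hqC hginv hghinv μ ν).continuousOn).mul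
      ((TT_C1 hU hghC ν a b).continuousOn)
  · refine ((invC2 hgC hginv μ ν).continuousOn).mul ?_
    have h1 := (hqC b ν).of_le (one_le_two : (1:WithTop ℕ∞) ≤ 2)
    exact ((pd_continuousOn hU ((hqC b ν).of_le one_le_two) a).add
      (pd_continuousOn hU ((hqC a ν).of_le one_le_two) b)).sub
      (pd_continuousOn hU ((hqC a b).of_le one_le_two) ν)

end Reg
end SOne
end Layer4
noncomputable section Layer4b
open Finset

namespace SOne

variable {N : ℕ}

def uXf (g : (Fin N → ℝ) → Matrix (Fin N) (Fin N) ℝ) (Ω : (Fin N → ℝ) → ℝ)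
    (x : Fin N → ℝ) : Fin N → ℝ := fun i => uLow g Ω i x

def cKf (g : (Fin N → ℝ) → Matrix (Fin N) (Fin N) ℝ) (Ω : (Fin N → ℝ) → ℝ) (k : ℕ)
    (x : Fin N → ℝ) : ℝ := ((k:ℝ)+1)*((k:ℝ)+2)*(Ffun g Ω x)^2

lemma sum_pull3 {ι : Type*} [Fintype ι] (A B C : ℝ) (h f r : ι → ℝ) :
    ∑ i, (h i + A * (B * f i) + C * r i)
      = ∑ i, h i + A * (B * ∑ i, f i) + C * ∑ i, r i := by
  simp [Finset.sum_add_distrib, Finset.mul_sum]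

section Diff

variable {U : Set (Fin N → ℝ)} {g gh q : (Fin N → ℝ) → Matrix (Fin N) (Fin N) ℝ}
  {Ω : (Fin N → ℝ) → ℝ} {k : ℕ}
variable (hU : IsOpen U) (hΩ : ContDiffOn ℝ 2 Ω U)
  (hgC : ∀ a b, ContDiffOn ℝ 2 (fun x => g x a b) U)
  (hghC : ∀ a b, ContDiffOn ℝ 2 (fun x => gh x a b) U)
  (hqC : ∀ a b, ContDiffOn ℝ 2 (fun x => q x a b) U)
  (hginv : ∀ x ∈ U, IsUnit (g x)) (hghinv : ∀ x ∈ U, IsUnit (gh x))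
  (hrel : ∀ x ∈ U, g x = gh x + (Ω x)^(k+2) • q x)
include hU hΩ hgC hghC hqC hginv hghinv hrel

lemma relE : ∀ x ∈ U, ∀ a b, g x a b = gh x a b + Ω x ^ (k+2) * q x a b := by
  intro x hx a b
  rw [hrel x hx]
  simp [Matrix.add_apply, Matrix.smul_apply, smul_eq_mul]

lemma pd_entry_diff : ∀ x ∈ U, ∀ c a b, pd c (fun y => g y a b) x
    = pd c (fun y => gh y a b) x + Ω x^(k+1) * phiD q Ω k c a b x := by
  intro x hx c a b
  have hΩd : DifferentiableAt ℝ Ω x := cd_dAt hU (hΩ.of_le one_le_two) hx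
  have hqd : DifferentiableAt ℝ (fun y => q y a b) x :=
    cd_dAt hU ((hqC a b).of_le one_le_two) hx
  have h1 : pd c (fun y => g y a b) x
      = pd c (fun y => gh y a b + Ω y^(k+2) * q y a b) x :=
    pd_congr hU hx (fun y hy => relE hU hΩ hgC hghC hqC hginv hghinv hrel y hy a b) c
  rw [h1, pd_add (h := fun y => Ω y^(k+2) * q y a b) (cd_dAt hU ((hghC a b).of_le one_le_two) hx) ((hΩd.pow (k+2)).mul hqd),
    pd_pow_mul hΩd hqd (k+1) c]
  unfold phiD
  push_cast
  ring

lemma TT_diff : ∀ x ∈ U, ∀ ν a b, TT g ν a b x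
    = TT gh ν a b x + Ω x^(k+1) * psiD q Ω k ν a b x := by
  intro x hx ν a b
  unfold TT psiD
  rw [pd_entry_diff hU hΩ hgC hghC hqC hginv hghinv hrel x hx a b ν,
    pd_entry_diff hU hΩ hgC hghC hqC hginv hghinv hrel x hx b a ν,
    pd_entry_diff hU hΩ hgC hghC hqC hginv hghinv hrel x hx ν a b]
  ring

lemma inv_diff : ∀ x ∈ U, ∀ μ ν, (g x)⁻¹ μ ν
    = (gh x)⁻¹ μ ν + Ω x^(k+2) * chiD g gh q μ ν x := by
  intro x hx μ ν
  have hdg : IsUnit (g x).det := (Matrix.isUnit_iff_isUnit_det _).mp (hginv x hx)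
  have hdgh : IsUnit (gh x).det := (Matrix.isUnit_iff_isUnit_det _).mp (hghinv x hx)
  have h1 : (g x)⁻¹ * (gh x - g x) * (gh x)⁻¹ = (g x)⁻¹ - (gh x)⁻¹ := by
    calc (g x)⁻¹ * (gh x - g x) * (gh x)⁻¹
        = ((g x)⁻¹ * gh x - 1) * (gh x)⁻¹ := by
          rw [Matrix.mul_sub, Matrix.nonsing_inv_mul _ hdg]
      _ = (g x)⁻¹ * (gh x * (gh x)⁻¹) - (gh x)⁻¹ := by
          rw [Matrix.sub_mul, Matrix.mul_assoc, Matrix.one_mul]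
      _ = (g x)⁻¹ - (gh x)⁻¹ := by rw [Matrix.mul_nonsing_inv _ hdgh, Matrix.mul_one]
  have h2 : gh x - g x = (-(Ω x^(k+2))) • q x := by
    rw [hrel x hx, neg_smul]
    abel
  have h3 : ((g x)⁻¹ * ((-(Ω x^(k+2))) • q x) * (gh x)⁻¹) μ ν
      = Ω x^(k+2) * chiD g gh q μ ν x := by
    have inner : ∀ j, (∑ i, (g x)⁻¹ μ i * ((-(Ω x^(k+2))) * q x i j)) * (gh x)⁻¹ j ν
        = (-(Ω x^(k+2))) * ∑ i, (g x)⁻¹ μ i * q x i j * (gh x)⁻¹ j ν := by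
      intro j
      rw [Finset.sum_mul, Finset.mul_sum]
      exact Finset.sum_congr rfl fun i _ => by ring
    calc ((g x)⁻¹ * ((-(Ω x^(k+2))) • q x) * (gh x)⁻¹) μ ν
        = ∑ j, (∑ i, (g x)⁻¹ μ i * ((-(Ω x^(k+2))) * q x i j)) * (gh x)⁻¹ j ν := by
          rw [Matrix.mul_apply]
          refine Finset.sum_congr rfl fun j _ => ?_
          rw [Matrix.mul_apply]
          congr 1
      _ = ∑ j, (-(Ω x^(k+2))) * ∑ i, (g x)⁻¹ μ i * q x i j * (gh x)⁻¹ j ν :=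
          Finset.sum_congr rfl fun j _ => inner j
      _ = (-(Ω x^(k+2))) * ∑ j, ∑ i, (g x)⁻¹ μ i * q x i j * (gh x)⁻¹ j ν :=
          (Finset.mul_sum _ _ _).symm
      _ = Ω x^(k+2) * chiD g gh q μ ν x := by unfold chiD; ring
  rw [h2] at h1
  have h5 := congrFun (congrFun h1 μ) ν
  have h6 : (g x)⁻¹ μ ν - (gh x)⁻¹ μ ν = Ω x^(k+2) * chiD g gh q μ ν x := by
    rw [← h3]
    rw [show ((g x)⁻¹ - (gh x)⁻¹) μ ν = (g x)⁻¹ μ ν - (gh x)⁻¹ μ ν from rfl] at h5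
    linarith [h5]
  linarith [h6]

lemma chris_diff : ∀ x ∈ U, ∀ μ a b, chris g μ a b x
    = chris gh μ a b x + Ω x^(k+1) * gamD g gh q Ω k μ a b x := by
  intro x hx μ a b
  rw [chris_eq g μ a b x, chris_eq gh μ a b x]
  have h1 : ∀ ν', (g x)⁻¹ μ ν' * TT g ν' a b x
      = (gh x)⁻¹ μ ν' * TT gh ν' a b x
        + Ω x^(k+1) * (Ω x * chiD g gh q μ ν' x * TT gh ν' a b x
            + (g x)⁻¹ μ ν' * psiD q Ω k ν' a b x) := by
    intro ν'
    have e1 := TT_diff hU hΩ hgC hghC hqC hginv hghinv hrel x hx ν' a b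
    have e2 := inv_diff hU hΩ hgC hghC hqC hginv hghinv hrel x hx μ ν'
    rw [e1, e2]
    ring
  rw [show (∑ ν', (g x)⁻¹ μ ν' * TT g ν' a b x)
      = ∑ ν', ((gh x)⁻¹ μ ν' * TT gh ν' a b x
          + Ω x^(k+1) * (Ω x * chiD g gh q μ ν' x * TT gh ν' a b x
              + (g x)⁻¹ μ ν' * psiD q Ω k ν' a b x))
      from Finset.sum_congr rfl fun ν' _ => h1 ν']
  rw [Finset.sum_add_distrib, ← Finset.mul_sum]
  unfold gamD
  ring

lemma pdchris_diff : ∀ x ∈ U, ∀ c μ a b,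
    pd c (chris g μ a b) x = pd c (chris gh μ a b) x
      + Ω x^k * (((k:ℝ)+1) * pd c Ω x * gamD g gh q Ω k μ a b x)
      + Ω x^(k+1) * pd c (gamD g gh q Ω k μ a b) x := by
  intro x hx c μ a b
  have hΩd : DifferentiableAt ℝ Ω x := cd_dAt hU (hΩ.of_le one_le_two) hx
  have hsub : pd c (fun y => chris g μ a b y - chris gh μ a b y) x
      = pd c (chris g μ a b) x - pd c (chris gh μ a b) x :=
    pd_sub (cd_dAt hU (chris_C1 hU hgC hginv μ a b) hx)
      (cd_dAt hU (chris_C1 hU hghC hghinv μ a b) hx)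
  have hcong : pd c (fun y => chris g μ a b y - chris gh μ a b y) x
      = pd c (fun y => Ω y^(k+1) * gamD g gh q Ω k μ a b y) x := by
    refine pd_congr hU hx (fun y hy => ?_) c
    rw [chris_diff hU hΩ hgC hghC hqC hginv hghinv hrel y hy μ a b]
    ring
  have hpm := pd_pow_mul hΩd
    (cd_dAt hU (gamD_C1 hU hΩ hgC hghC hqC hginv hghinv k μ a b) hx) k c
  rw [hcong, hpm] at hsub
  linarith [hsub]

def rhoR (g gh q : (Fin N → ℝ) → Matrix (Fin N) (Fin N) ℝ) (Ω : (Fin N → ℝ) → ℝ) (k : ℕ)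
    (μ ν a b : Fin N) (x : Fin N → ℝ) : ℝ :=
  ((k:ℝ)+1) * pd a Ω x * gamR g gh q Ω μ b ν x + pd a (gamD g gh q Ω k μ b ν) x
  - ((k:ℝ)+1) * pd b Ω x * gamR g gh q Ω μ a ν x - pd b (gamD g gh q Ω k μ a ν) x
  + ∑ σ, (chris g μ a σ x * gamD g gh q Ω k σ b ν x
      + gamD g gh q Ω k μ a σ x * chris gh σ b ν x
      - chris g μ b σ x * gamD g gh q Ω k σ a ν x
      - gamD g gh q Ω k μ b σ x * chris gh σ a ν x)

lemma riem_diff : ∀ x ∈ U, ∀ μ ν a b,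
    riem g μ ν a b x = riem gh μ ν a b x
      + Ω x^k * (((k:ℝ)+1) * pd a Ω x * gamL g q Ω k μ b ν x
          - ((k:ℝ)+1) * pd b Ω x * gamL g q Ω k μ a ν x)
      + Ω x^(k+1) * rhoR g gh q Ω k μ ν a b x := by
  intro x hx μ ν a b
  have hquadsum : (∑ σ, (chris g μ a σ x * chris g σ b ν x - chris g μ b σ x * chris g σ a ν x))
      - (∑ σ, (chris gh μ a σ x * chris gh σ b ν x - chris gh μ b σ x * chris gh σ a ν x))
      = Ω x^(k+1) * ∑ σ, (chris g μ a σ x * gamD g gh q Ω k σ b ν x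
          + gamD g gh q Ω k μ a σ x * chris gh σ b ν x
          - chris g μ b σ x * gamD g gh q Ω k σ a ν x
          - gamD g gh q Ω k μ b σ x * chris gh σ a ν x) := by
    rw [← Finset.sum_sub_distrib, Finset.mul_sum]
    refine Finset.sum_congr rfl fun σ _ => ?_
    have e1 := chris_diff hU hΩ hgC hghC hqC hginv hghinv hrel x hx μ a σ
    have e2 := chris_diff hU hΩ hgC hghC hqC hginv hghinv hrel x hx σ b ν
    have e3 := chris_diff hU hΩ hgC hghC hqC hginv hghinv hrel x hx μ b σ
    have e4 := chris_diff hU hΩ hgC hghC hqC hginv hghinv hrel x hx σ a ν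
    rw [e1, e2, e3, e4]
    ring
  have h1 := pdchris_diff hU hΩ hgC hghC hqC hginv hghinv hrel x hx a μ b ν
  have h2 := pdchris_diff hU hΩ hgC hghC hqC hginv hghinv hrel x hx b μ a ν
  have hg1 := gamD_split g gh q Ω k μ b ν x
  have hg2 := gamD_split g gh q Ω k μ a ν x
  have eg : riem g μ ν a b x = pd a (chris g μ b ν) x - pd b (chris g μ a ν) x
      + ∑ σ, (chris g μ a σ x * chris g σ b ν x - chris g μ b σ x * chris g σ a ν x) := rfl
  have egh : riem gh μ ν a b x = pd a (chris gh μ b ν) x - pd b (chris gh μ a ν) x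
      + ∑ σ, (chris gh μ a σ x * chris gh σ b ν x - chris gh μ b σ x * chris gh σ a ν x) := rfl
  rw [eg, egh]
  unfold rhoR
  linear_combination h1 - h2 + hquadsum
    + (Ω x^k * (((k:ℝ)+1) * pd a Ω x)) * hg1 - (Ω x^k * (((k:ℝ)+1) * pd b Ω x)) * hg2


lemma lead_bridge (hnonnull : ∀ x ∈ U, gradSq g Ω x ≠ 0) :
    ∀ x ∈ U, ∀ c μ a b, ((k:ℝ)+1) * pd c Ω x * gamL g q Ω k μ a b x
      = cKf g Ω k x * Lch (g x)⁻¹ (q x) (uXf g Ω x) c μ a b := by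
  intro x hx c μ a b
  have hFne : Ffun g Ω x ≠ 0 :=
    ne_of_gt (Real.sqrt_pos.mpr (abs_pos.mpr (hnonnull x hx)))
  have hw : ∀ c', pd c' Ω x = Ffun g Ω x * uXf g Ω x c' := by
    intro c'
    unfold uXf uLow
    field_simp
  unfold gamL Lch cKf uXf
  rw [show (∑ ν', (g x)⁻¹ μ ν' * (pd a Ω x * q x b ν' + pd b Ω x * q x a ν'
        - pd ν' Ω x * q x a b))
      = Ffun g Ω x * ∑ ν', (g x)⁻¹ μ ν' * (uLow g Ω a x * q x b ν'
          + uLow g Ω b x * q x a ν' - uLow g Ω ν' x * q x a b) from by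
    rw [Finset.mul_sum]
    refine Finset.sum_congr rfl fun ν' _ => ?_
    rw [hw a, hw b, hw ν']
    unfold uXf
    ring]
  rw [hw c]
  unfold uXf
  ring

lemma riem_diff' (hnonnull : ∀ x ∈ U, gradSq g Ω x ≠ 0) :
    ∀ x ∈ U, ∀ μ ν a b, riem g μ ν a b x = riem gh μ ν a b x
      + Ω x^k * (cKf g Ω k x * AA (g x)⁻¹ (q x) (uXf g Ω x) μ ν a b)
      + Ω x^(k+1) * rhoR g gh q Ω k μ ν a b x := by
  intro x hx μ ν a b
  have hb1 := lead_bridge hU hΩ hgC hghC hqC hginv hghinv hrel hnonnull x hx a μ b ν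
  have hb2 := lead_bridge hU hΩ hgC hghC hqC hginv hghinv hrel hnonnull x hx b μ a ν
  have hA : AA (g x)⁻¹ (q x) (uXf g Ω x) μ ν a b
      = Lch (g x)⁻¹ (q x) (uXf g Ω x) a μ b ν
        - Lch (g x)⁻¹ (q x) (uXf g Ω x) b μ a ν := rfl
  have hr := riem_diff hU hΩ hgC hghC hqC hginv hghinv hrel x hx μ ν a b
  linear_combination hr + Ω x^k * hb1 - Ω x^k * hb2 - (Ω x^k * cKf g Ω k x) * hA

def rhoRic (g gh q : (Fin N → ℝ) → Matrix (Fin N) (Fin N) ℝ) (Ω : (Fin N → ℝ) → ℝ) (k : ℕ)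
    (ν b : Fin N) (x : Fin N → ℝ) : ℝ := ∑ μ, rhoR g gh q Ω k μ ν μ b x

def rhoS (g gh q : (Fin N → ℝ) → Matrix (Fin N) (Fin N) ℝ) (Ω : (Fin N → ℝ) → ℝ) (k : ℕ)
    (x : Fin N → ℝ) : ℝ :=
  ∑ ν, ∑ β, ((g x)⁻¹ ν β * rhoRic g gh q Ω k ν β x
    + Ω x * (chiD g gh q ν β x * ricci gh ν β x))

def rhoU (g gh q : (Fin N → ℝ) → Matrix (Fin N) (Fin N) ℝ) (Ω : (Fin N → ℝ) → ℝ) (k : ℕ)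
    (μ β : Fin N) (x : Fin N → ℝ) : ℝ :=
  ∑ σ, ((g x)⁻¹ μ σ * rhoRic g gh q Ω k σ β x
    + Ω x * (chiD g gh q μ σ x * ricci gh σ β x))


lemma ricci_diff (hnonnull : ∀ x ∈ U, gradSq g Ω x ≠ 0) :
    ∀ x ∈ U, ∀ ν b, ricci g ν b x = ricci gh ν b x
      + Ω x^k * (cKf g Ω k x * BB (g x)⁻¹ (q x) (uXf g Ω x) ν b)
      + Ω x^(k+1) * rhoRic g gh q Ω k ν b x := by
  intro x hx ν b
  have e1 : ricci g ν b x = ∑ μ, riem g μ ν μ b x := rfl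
  have e2 : ricci gh ν b x = ∑ μ, riem gh μ ν μ b x := rfl
  have e3 : BB (g x)⁻¹ (q x) (uXf g Ω x) ν b
      = ∑ μ, AA (g x)⁻¹ (q x) (uXf g Ω x) μ ν μ b := rfl
  have e4 : rhoRic g gh q Ω k ν b x = ∑ μ, rhoR g gh q Ω k μ ν μ b x := rfl
  rw [e1, e2, e3, e4,
    show (∑ μ, riem g μ ν μ b x)
      = ∑ μ, (riem gh μ ν μ b x
          + Ω x^k * (cKf g Ω k x * AA (g x)⁻¹ (q x) (uXf g Ω x) μ ν μ b)
          + Ω x^(k+1) * rhoR g gh q Ω k μ ν μ b x)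
      from Finset.sum_congr rfl fun μ _ =>
        riem_diff' hU hΩ hgC hghC hqC hginv hghinv hrel hnonnull x hx μ ν μ b,
    sum_pull3]

lemma scal_diff (hnonnull : ∀ x ∈ U, gradSq g Ω x ≠ 0) :
    ∀ x ∈ U, scal g x = scal gh x
      + Ω x^k * (cKf g Ω k x * SS (g x)⁻¹ (q x) (uXf g Ω x))
      + Ω x^(k+1) * rhoS g gh q Ω k x := by
  intro x hx
  have hterm : ∀ ν β, (g x)⁻¹ ν β * ricci g ν β x
      = (gh x)⁻¹ ν β * ricci gh ν β x
        + Ω x^k * (cKf g Ω k x * ((g x)⁻¹ ν β * BB (g x)⁻¹ (q x) (uXf g Ω x) ν β))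
        + Ω x^(k+1) * ((g x)⁻¹ ν β * rhoRic g gh q Ω k ν β x
            + Ω x * (chiD g gh q ν β x * ricci gh ν β x)) := by
    intro ν β
    have e1 := ricci_diff hU hΩ hgC hghC hqC hginv hghinv hrel hnonnull x hx ν β
    have e2 := inv_diff hU hΩ hgC hghC hqC hginv hghinv hrel x hx ν β
    linear_combination ((g x)⁻¹ ν β) * e1 + (ricci gh ν β x) * e2
  have hin : ∀ ν, (∑ β, (g x)⁻¹ ν β * ricci g ν β x)
      = ∑ β, (gh x)⁻¹ ν β * ricci gh ν β x
        + Ω x^k * (cKf g Ω k x * ∑ β, (g x)⁻¹ ν β * BB (g x)⁻¹ (q x) (uXf g Ω x) ν β)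
        + Ω x^(k+1) * ∑ β, ((g x)⁻¹ ν β * rhoRic g gh q Ω k ν β x
            + Ω x * (chiD g gh q ν β x * ricci gh ν β x)) := by
    intro ν
    rw [show (∑ β, (g x)⁻¹ ν β * ricci g ν β x)
        = ∑ β, ((gh x)⁻¹ ν β * ricci gh ν β x
            + Ω x^k * (cKf g Ω k x * ((g x)⁻¹ ν β * BB (g x)⁻¹ (q x) (uXf g Ω x) ν β))
            + Ω x^(k+1) * ((g x)⁻¹ ν β * rhoRic g gh q Ω k ν β x
                + Ω x * (chiD g gh q ν β x * ricci gh ν β x)))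
        from Finset.sum_congr rfl fun β _ => hterm ν β, sum_pull3]
  have e1 : scal g x = ∑ ν, ∑ β, (g x)⁻¹ ν β * ricci g ν β x := rfl
  have e2 : scal gh x = ∑ ν, ∑ β, (gh x)⁻¹ ν β * ricci gh ν β x := rfl
  rw [e1, e2,
    show (∑ ν, ∑ β, (g x)⁻¹ ν β * ricci g ν β x)
      = ∑ ν, (∑ β, (gh x)⁻¹ ν β * ricci gh ν β x
          + Ω x^k * (cKf g Ω k x * ∑ β, (g x)⁻¹ ν β * BB (g x)⁻¹ (q x) (uXf g Ω x) ν β)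
          + Ω x^(k+1) * ∑ β, ((g x)⁻¹ ν β * rhoRic g gh q Ω k ν β x
              + Ω x * (chiD g gh q ν β x * ricci gh ν β x)))
      from Finset.sum_congr rfl fun ν _ => hin ν, sum_pull3]
  rfl

lemma ricUp_diff (hnonnull : ∀ x ∈ U, gradSq g Ω x ≠ 0) :
    ∀ x ∈ U, ∀ μ β, ricUp g μ β x = ricUp gh μ β x
      + Ω x^k * (cKf g Ω k x * BUu (g x)⁻¹ (q x) (uXf g Ω x) μ β)
      + Ω x^(k+1) * rhoU g gh q Ω k μ β x := by
  intro x hx μ β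
  have hterm : ∀ σ, (g x)⁻¹ μ σ * ricci g σ β x
      = (gh x)⁻¹ μ σ * ricci gh σ β x
        + Ω x^k * (cKf g Ω k x * ((g x)⁻¹ μ σ * BB (g x)⁻¹ (q x) (uXf g Ω x) σ β))
        + Ω x^(k+1) * ((g x)⁻¹ μ σ * rhoRic g gh q Ω k σ β x
            + Ω x * (chiD g gh q μ σ x * ricci gh σ β x)) := by
    intro σ
    have e1 := ricci_diff hU hΩ hgC hghC hqC hginv hghinv hrel hnonnull x hx σ β
    have e2 := inv_diff hU hΩ hgC hghC hqC hginv hghinv hrel x hx μ σ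
    linear_combination ((g x)⁻¹ μ σ) * e1 + (ricci gh σ β x) * e2
  have e1 : ricUp g μ β x = ∑ σ, (g x)⁻¹ μ σ * ricci g σ β x := rfl
  have e2 : ricUp gh μ β x = ∑ σ, (gh x)⁻¹ μ σ * ricci gh σ β x := rfl
  rw [e1, e2,
    show (∑ σ, (g x)⁻¹ μ σ * ricci g σ β x)
      = ∑ σ, ((gh x)⁻¹ μ σ * ricci gh σ β x
          + Ω x^k * (cKf g Ω k x * ((g x)⁻¹ μ σ * BB (g x)⁻¹ (q x) (uXf g Ω x) σ β))
          + Ω x^(k+1) * ((g x)⁻¹ μ σ * rhoRic g gh q Ω k σ β x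
              + Ω x * (chiD g gh q μ σ x * ricci gh σ β x)))
      from Finset.sum_congr rfl fun σ _ => hterm σ, sum_pull3]
  rfl

def rhoW (g gh q : (Fin N → ℝ) → Matrix (Fin N) (Fin N) ℝ) (Ω : (Fin N → ℝ) → ℝ) (k : ℕ)
    (μ ν a b : Fin N) (x : Fin N → ℝ) : ℝ :=
  rhoR g gh q Ω k μ ν a b x
  - (2/((N:ℝ)-2)) * ((1/2)*((if μ = a then (1:ℝ) else 0) * rhoRic g gh q Ω k b ν x
        - (if μ = b then (1:ℝ) else 0) * rhoRic g gh q Ω k a ν x)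
      - (1/2)*(g x ν a * rhoU g gh q Ω k μ b x + Ω x * (q x ν a * ricUp gh μ b x)
          - g x ν b * rhoU g gh q Ω k μ a x - Ω x * (q x ν b * ricUp gh μ a x)))
  + (2/(((N:ℝ)-1)*((N:ℝ)-2))) * (rhoS g gh q Ω k x
        * ((1/2)*((if μ = a then (1:ℝ) else 0) * g x b ν
            - (if μ = b then (1:ℝ) else 0) * g x a ν))
      + scal gh x * ((1/2)*((if μ = a then (1:ℝ) else 0) * (Ω x * q x b ν)
            - (if μ = b then (1:ℝ) else 0) * (Ω x * q x a ν))))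

lemma weyl_diff (hnonnull : ∀ x ∈ U, gradSq g Ω x ≠ 0) :
    ∀ x ∈ U, ∀ μ ν a b, weyl g μ ν a b x = weyl gh μ ν a b x
      + Ω x^k * (cKf g Ω k x * (AA (g x)⁻¹ (q x) (uXf g Ω x) μ ν a b
          - (2/((N:ℝ)-2)) * ((1/2)*((if μ = a then (1:ℝ) else 0)
                  * BB (g x)⁻¹ (q x) (uXf g Ω x) b ν
                - (if μ = b then (1:ℝ) else 0) * BB (g x)⁻¹ (q x) (uXf g Ω x) a ν)
              - (1/2)*(g x ν a * BUu (g x)⁻¹ (q x) (uXf g Ω x) μ b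
                - g x ν b * BUu (g x)⁻¹ (q x) (uXf g Ω x) μ a))
          + (2 * SS (g x)⁻¹ (q x) (uXf g Ω x)/(((N:ℝ)-1)*((N:ℝ)-2)))
              * ((1/2)*((if μ = a then (1:ℝ) else 0) * g x b ν
                - (if μ = b then (1:ℝ) else 0) * g x a ν))))
      + Ω x^(k+1) * rhoW g gh q Ω k μ ν a b x := by
  intro x hx μ ν a b
  have eg : weyl g μ ν a b x = riem g μ ν a b x
      - (2 / ((N : ℝ) - 2)) *
          ((1/2) * ((if μ = a then (1:ℝ) else 0) * ricci g b ν x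
              - (if μ = b then (1:ℝ) else 0) * ricci g a ν x)
            - (1/2) * (g x ν a * ricUp g μ b x - g x ν b * ricUp g μ a x))
      + (2 * scal g x / (((N : ℝ) - 1) * ((N : ℝ) - 2))) *
          ((1/2) * ((if μ = a then (1:ℝ) else 0) * g x b ν
              - (if μ = b then (1:ℝ) else 0) * g x a ν)) := rfl
  have egh : weyl gh μ ν a b x = riem gh μ ν a b x
      - (2 / ((N : ℝ) - 2)) *
          ((1/2) * ((if μ = a then (1:ℝ) else 0) * ricci gh b ν x
              - (if μ = b then (1:ℝ) else 0) * ricci gh a ν x)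
            - (1/2) * (gh x ν a * ricUp gh μ b x - gh x ν b * ricUp gh μ a x))
      + (2 * scal gh x / (((N : ℝ) - 1) * ((N : ℝ) - 2))) *
          ((1/2) * ((if μ = a then (1:ℝ) else 0) * gh x b ν
              - (if μ = b then (1:ℝ) else 0) * gh x a ν)) := rfl
  rw [eg, egh]
  unfold rhoW
  have hR := riem_diff' hU hΩ hgC hghC hqC hginv hghinv hrel hnonnull x hx μ ν a b
  have hRic1 := ricci_diff hU hΩ hgC hghC hqC hginv hghinv hrel hnonnull x hx b ν
  have hRic2 := ricci_diff hU hΩ hgC hghC hqC hginv hghinv hrel hnonnull x hx a ν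
  have hUp1 := ricUp_diff hU hΩ hgC hghC hqC hginv hghinv hrel hnonnull x hx μ b
  have hUp2 := ricUp_diff hU hΩ hgC hghC hqC hginv hghinv hrel hnonnull x hx μ a
  have hS := scal_diff hU hΩ hgC hghC hqC hginv hghinv hrel hnonnull x hx
  have hg1 := relE hU hΩ hgC hghC hqC hginv hghinv hrel x hx ν a
  have hg2 := relE hU hΩ hgC hghC hqC hginv hghinv hrel x hx ν b
  have hg3 := relE hU hΩ hgC hghC hqC hginv hghinv hrel x hx b ν
  have hg4 := relE hU hΩ hgC hghC hqC hginv hghinv hrel x hx a ν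
  linear_combination hR
    - (2/((N:ℝ)-2)) * ((1/2) * (if μ = a then (1:ℝ) else 0)) * hRic1
    + (2/((N:ℝ)-2)) * ((1/2) * (if μ = b then (1:ℝ) else 0)) * hRic2
    + (2/((N:ℝ)-2)) * ((1/2) * (g x ν a)) * hUp1
    + (2/((N:ℝ)-2)) * ((1/2) * (ricUp gh μ b x)) * hg1
    - (2/((N:ℝ)-2)) * ((1/2) * (g x ν b)) * hUp2
    - (2/((N:ℝ)-2)) * ((1/2) * (ricUp gh μ a x)) * hg2
    + (2/(((N:ℝ)-1)*((N:ℝ)-2))) * ((1/2) * (if μ = a then (1:ℝ) else 0) * (g x b ν)) * hS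
    + (2/(((N:ℝ)-1)*((N:ℝ)-2))) * ((1/2) * (if μ = a then (1:ℝ) else 0) * (scal gh x)) * hg3
    - (2/(((N:ℝ)-1)*((N:ℝ)-2))) * ((1/2) * (if μ = b then (1:ℝ) else 0) * (g x a ν)) * hS
    - (2/(((N:ℝ)-1)*((N:ℝ)-2))) * ((1/2) * (if μ = b then (1:ℝ) else 0) * (scal gh x)) * hg4

end Diff
end SOne
end Layer4b

noncomputable section Layer4d
open Finset

namespace SOne

variable {N : ℕ}

section Cont

variable {U : Set (Fin N → ℝ)} {g gh q : (Fin N → ℝ) → Matrix (Fin N) (Fin N) ℝ}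
  {Ω : (Fin N → ℝ) → ℝ} {k : ℕ}
variable (hU : IsOpen U) (hΩ : ContDiffOn ℝ 2 Ω U)
  (hgC : ∀ a b, ContDiffOn ℝ 2 (fun x => g x a b) U)
  (hghC : ∀ a b, ContDiffOn ℝ 2 (fun x => gh x a b) U)
  (hqC : ∀ a b, ContDiffOn ℝ 2 (fun x => q x a b) U)
  (hginv : ∀ x ∈ U, IsUnit (g x)) (hghinv : ∀ x ∈ U, IsUnit (gh x))
include hU hΩ hgC hghC hqC hginv hghinv

lemma rhoR_cont (μ ν a b : Fin N) : ContinuousOn (rhoR g gh q Ω k μ ν a b) U := by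
  have hΩ1 : ContDiffOn ℝ 1 Ω U := hΩ.of_le one_le_two
  have e : rhoR g gh q Ω k μ ν a b = fun x =>
      ((k:ℝ)+1) * pd a Ω x * gamR g gh q Ω μ b ν x + pd a (gamD g gh q Ω k μ b ν) x
      - ((k:ℝ)+1) * pd b Ω x * gamR g gh q Ω μ a ν x - pd b (gamD g gh q Ω k μ a ν) x
      + ∑ σ, (chris g μ a σ x * gamD g gh q Ω k σ b ν x
          + gamD g gh q Ω k μ a σ x * chris gh σ b ν x
          - chris g μ b σ x * gamD g gh q Ω k σ a ν x
          - gamD g gh q Ω k μ b σ x * chris gh σ a ν x) := rfl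
  rw [e]
  have hgam : ∀ μ' a' b', ContinuousOn (gamD g gh q Ω k μ' a' b') U := fun μ' a' b' =>
    (gamD_C1 hU hΩ hgC hghC hqC hginv hghinv k μ' a' b').continuousOn
  have hch : ∀ μ' a' b', ContinuousOn (chris g μ' a' b') U := fun μ' a' b' =>
    (chris_C1 hU hgC hginv μ' a' b').continuousOn
  have hchh : ∀ μ' a' b', ContinuousOn (chris gh μ' a' b') U := fun μ' a' b' =>
    (chris_C1 hU hghC hghinv μ' a' b').continuousOn
  refine ContinuousOn.add (ContinuousOn.sub (ContinuousOn.sub (ContinuousOn.add ?_ ?_) ?_) ?_) ?_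
  · exact (continuousOn_const.mul (pd_continuousOn hU hΩ1 a)).mul
      (gamR_cont hU hΩ hgC hghC hqC hginv hghinv μ b ν)
  · exact pd_continuousOn hU (gamD_C1 hU hΩ hgC hghC hqC hginv hghinv k μ b ν) a
  · exact (continuousOn_const.mul (pd_continuousOn hU hΩ1 b)).mul
      (gamR_cont hU hΩ hgC hghC hqC hginv hghinv μ a ν)
  · exact pd_continuousOn hU (gamD_C1 hU hΩ hgC hghC hqC hginv hghinv k μ a ν) b
  · refine continuousOn_finset_sum _ fun σ _ => ?_
    exact ((((hch μ a σ).mul (hgam σ b ν)).add ((hgam μ a σ).mul (hchh σ b ν))).sub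
      ((hch μ b σ).mul (hgam σ a ν))).sub ((hgam μ b σ).mul (hchh σ a ν))

lemma rhoRic_cont (ν b : Fin N) : ContinuousOn (rhoRic g gh q Ω k ν b) U := by
  have e : rhoRic g gh q Ω k ν b = fun x => ∑ μ, rhoR g gh q Ω k μ ν μ b x := rfl
  rw [e]
  exact continuousOn_finset_sum _ fun μ _ =>
    rhoR_cont hU hΩ hgC hghC hqC hginv hghinv μ ν μ b

lemma rhoS_cont : ContinuousOn (rhoS g gh q Ω k) U := by
  have e : rhoS g gh q Ω k = fun x => ∑ ν, ∑ β, ((g x)⁻¹ ν β * rhoRic g gh q Ω k ν β x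
      + Ω x * (chiD g gh q ν β x * ricci gh ν β x)) := rfl
  rw [e]
  refine continuousOn_finset_sum _ fun ν _ => continuousOn_finset_sum _ fun β _ =>
    ContinuousOn.add ?_ ?_
  · exact ((invC2 hgC hginv ν β).continuousOn).mul
      (rhoRic_cont hU hΩ hgC hghC hqC hginv hghinv ν β)
  · exact ((hΩ.of_le one_le_two).continuousOn).mul
      (((chiD_cont hU hgC hghC hqC hginv hghinv ν β).continuousOn).mul
        (ricci_cont hU hghC hghinv ν β))

lemma rhoU_cont (μ β : Fin N) : ContinuousOn (rhoU g gh q Ω k μ β) U := by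
  have e : rhoU g gh q Ω k μ β = fun x => ∑ σ, ((g x)⁻¹ μ σ * rhoRic g gh q Ω k σ β x
      + Ω x * (chiD g gh q μ σ x * ricci gh σ β x)) := rfl
  rw [e]
  refine continuousOn_finset_sum _ fun σ _ => ContinuousOn.add ?_ ?_
  · exact ((invC2 hgC hginv μ σ).continuousOn).mul
      (rhoRic_cont hU hΩ hgC hghC hqC hginv hghinv σ β)
  · exact ((hΩ.of_le one_le_two).continuousOn).mul
      (((chiD_cont hU hgC hghC hqC hginv hghinv μ σ).continuousOn).mul
        (ricci_cont hU hghC hghinv σ β))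

lemma rhoW_cont (μ ν a b : Fin N) : ContinuousOn (rhoW g gh q Ω k μ ν a b) U := by
  have hΩc : ContinuousOn Ω U := (hΩ.of_le one_le_two).continuousOn
  have hgc : ∀ i j, ContinuousOn (fun x => g x i j) U := fun i j => (hgC i j).continuousOn
  have hqc : ∀ i j, ContinuousOn (fun x => q x i j) U := fun i j => (hqC i j).continuousOn
  have e : rhoW g gh q Ω k μ ν a b = fun x =>
      rhoR g gh q Ω k μ ν a b x
      - (2/((N:ℝ)-2)) * ((1/2)*((if μ = a then (1:ℝ) else 0) * rhoRic g gh q Ω k b ν x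
            - (if μ = b then (1:ℝ) else 0) * rhoRic g gh q Ω k a ν x)
          - (1/2)*(g x ν a * rhoU g gh q Ω k μ b x + Ω x * (q x ν a * ricUp gh μ b x)
              - g x ν b * rhoU g gh q Ω k μ a x - Ω x * (q x ν b * ricUp gh μ a x)))
      + (2/(((N:ℝ)-1)*((N:ℝ)-2))) * (rhoS g gh q Ω k x
            * ((1/2)*((if μ = a then (1:ℝ) else 0) * g x b ν
                - (if μ = b then (1:ℝ) else 0) * g x a ν))
          + scal gh x * ((1/2)*((if μ = a then (1:ℝ) else 0) * (Ω x * q x b ν)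
                - (if μ = b then (1:ℝ) else 0) * (Ω x * q x a ν)))) := rfl
  rw [e]
  refine ContinuousOn.add (ContinuousOn.sub ?_ ?_) ?_
  · exact rhoR_cont hU hΩ hgC hghC hqC hginv hghinv μ ν a b
  · refine continuousOn_const.mul (ContinuousOn.sub (continuousOn_const.mul
      (ContinuousOn.sub (continuousOn_const.mul
        (rhoRic_cont hU hΩ hgC hghC hqC hginv hghinv b ν))
        (continuousOn_const.mul (rhoRic_cont hU hΩ hgC hghC hqC hginv hghinv a ν)))) ?_)
    refine continuousOn_const.mul (ContinuousOn.sub (ContinuousOn.sub (ContinuousOn.add ?_ ?_) ?_) ?_)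
    · exact (hgc ν a).mul (rhoU_cont hU hΩ hgC hghC hqC hginv hghinv μ b)
    · exact hΩc.mul ((hqc ν a).mul (ricUp_cont hU hghC hghinv μ b))
    · exact (hgc ν b).mul (rhoU_cont hU hΩ hgC hghC hqC hginv hghinv μ a)
    · exact hΩc.mul ((hqc ν b).mul (ricUp_cont hU hghC hghinv μ a))
  · refine continuousOn_const.mul (ContinuousOn.add ?_ ?_)
    · exact (rhoS_cont hU hΩ hgC hghC hqC hginv hghinv).mul
        (continuousOn_const.mul (ContinuousOn.sub
          (continuousOn_const.mul (hgc b ν)) (continuousOn_const.mul (hgc a ν))))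
    · refine (scal_cont hU hghC hghinv).mul (continuousOn_const.mul (ContinuousOn.sub ?_ ?_))
      · exact continuousOn_const.mul (hΩc.mul (hqc b ν))
      · exact continuousOn_const.mul (hΩc.mul (hqc a ν))

end Cont
end SOne
end Layer4d

set_option maxHeartbeats 2000000 in
/-- Lemma 2.4 of the paper. If `g = ĝ + Ω^m q` with `∇Ω` nowhere null,
then `C(g) - C(ĝ)` agrees with the explicit `K_m(Ω)`-terms up to `o(Ω^{m-2})`, i.e.
`Ω^{2-m} E → 0` at every point of `{Ω = 0}` within `{Ω ≠ 0}`. -/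
theorem statement1
    (n m : ℕ) (hn : 3 ≤ n) (hm : 2 ≤ m)
    (U : Set (Fin (n+1) → ℝ)) (hU : IsOpen U)
    (Ω : (Fin (n+1) → ℝ) → ℝ) (hΩ : ContDiffOn ℝ 2 Ω U)
    (g gh q : (Fin (n+1) → ℝ) → Matrix (Fin (n+1)) (Fin (n+1)) ℝ)
    (hgC : ∀ α β : Fin (n+1), ContDiffOn ℝ 2 (fun x => g x α β) U)
    (hghC : ∀ α β : Fin (n+1), ContDiffOn ℝ 2 (fun x => gh x α β) U)
    (hqC : ∀ α β : Fin (n+1), ContDiffOn ℝ 2 (fun x => q x α β) U)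
    (hgs : ∀ x ∈ U, (g x)ᵀ = g x)
    (hghs : ∀ x ∈ U, (gh x)ᵀ = gh x)
    (hqs : ∀ x ∈ U, (q x)ᵀ = q x)
    (hginv : ∀ x ∈ U, IsUnit (g x))
    (hghinv : ∀ x ∈ U, IsUnit (gh x))
    (hrel : ∀ x ∈ U, g x = gh x + (Ω x)^m • q x)
    (hnonnull : ∀ x ∈ U, gradSq g Ω x ≠ 0) :
    ∀ x₀ ∈ U, Ω x₀ = 0 → ∀ μ ν α β : Fin (n+1),
      Filter.Tendsto (fun x => (Ω x) ^ ((2 : ℤ) - (m : ℤ)) * Etensor n m g gh q Ω μ ν α β x)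
        (nhdsWithin x₀ {x | x ∈ U ∧ Ω x ≠ 0}) (nhds 0) := by
  obtain ⟨k, rfl⟩ : ∃ k, m = k + 2 := ⟨m - 2, by omega⟩
  intro x₀ hx₀ hΩ0 μ ν a b
  have hn0 : (n:ℝ) ≠ 0 := by
    have : (0:ℝ) < (n:ℝ) := by exact_mod_cast (by omega : 0 < n)
    exact ne_of_gt this
  have hn1 : (n:ℝ) - 1 ≠ 0 := by
    have : (1:ℝ) < (n:ℝ) := by exact_mod_cast (by omega : 1 < n)
    intro h; linarith
  -- the key pointwise factorization
  have hE : ∀ x ∈ U, Etensor n (k+2) g gh q Ω μ ν a b x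
      = Ω x ^ (k+1) * SOne.rhoW g gh q Ω k μ ν a b x := by
    intro x hx
    have hdet : IsUnit (g x).det := (Matrix.isUnit_iff_isUnit_det _).mp (hginv x hx)
    have hGsym : ∀ i j, g x i j = g x j i := by
      intro i j
      have h := congrFun (congrFun (hgs x hx) j) i
      rw [Matrix.transpose_apply] at h
      exact h
    have hQsym : ∀ i j, q x i j = q x j i := by
      intro i j
      have h := congrFun (congrFun (hqs x hx) j) i
      rw [Matrix.transpose_apply] at h
      exact h
    have hTi : ((g x)⁻¹)ᵀ = (g x)⁻¹ := by
      rw [Matrix.transpose_nonsing_inv, hgs x hx]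
    have hgisym : ∀ i j, (g x)⁻¹ i j = (g x)⁻¹ j i := by
      intro i j
      have h := congrFun (congrFun hTi j) i
      rw [Matrix.transpose_apply] at h
      exact h
    have hinv : ∀ i j, (∑ σ, (g x)⁻¹ i σ * g x σ j) = if i = j then (1:ℝ) else 0 := by
      intro i j
      rw [← Matrix.mul_apply, Matrix.nonsing_inv_mul _ hdet, Matrix.one_apply]
    have hgs0 := hnonnull x hx
    have hFne : Ffun g Ω x ≠ 0 := ne_of_gt (Real.sqrt_pos.mpr (abs_pos.mpr hgs0))
    have hF2 : (Ffun g Ω x)^2 = |gradSq g Ω x| := Real.sq_sqrt (abs_nonneg _)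
    have hgrad : gradSq g Ω x = epsn g Ω x * (Ffun g Ω x)^2 := by
      unfold epsn
      rw [hF2]
      rcases hgs0.lt_or_gt with h|h
      · rw [Real.sign_of_neg h, abs_of_neg h]; ring
      · rw [Real.sign_of_pos h, abs_of_pos h]; ring
    have hu : (∑ μ', SOne.uU (g x)⁻¹ (SOne.uXf g Ω x) μ' * SOne.uXf g Ω x μ')
        = epsn g Ω x := by
      have e2 : (∑ μ', SOne.uU (g x)⁻¹ (SOne.uXf g Ω x) μ' * SOne.uXf g Ω x μ')
          = ∑ μ', ∑ σ, ((Ffun g Ω x)⁻¹ * (Ffun g Ω x)⁻¹)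
              * ((g x)⁻¹ μ' σ * pd μ' Ω x * pd σ Ω x) := by
        refine Finset.sum_congr rfl fun μ' _ => ?_
        have e3 : SOne.uU (g x)⁻¹ (SOne.uXf g Ω x) μ'
            = ∑ σ, (g x)⁻¹ μ' σ * ((Ffun g Ω x)⁻¹ * pd σ Ω x) := rfl
        rw [e3, Finset.sum_mul]
        refine Finset.sum_congr rfl fun σ _ => ?_
        have e4 : SOne.uXf g Ω x μ' = (Ffun g Ω x)⁻¹ * pd μ' Ω x := rfl
        rw [e4]
        ring
      have e5 : (∑ μ', ∑ σ, ((Ffun g Ω x)⁻¹ * (Ffun g Ω x)⁻¹)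
            * ((g x)⁻¹ μ' σ * pd μ' Ω x * pd σ Ω x))
          = ((Ffun g Ω x)⁻¹ * (Ffun g Ω x)⁻¹) * gradSq g Ω x := by
        have e6 : gradSq g Ω x = ∑ μ', ∑ σ, (g x)⁻¹ μ' σ * pd μ' Ω x * pd σ Ω x := rfl
        rw [e6, Finset.mul_sum]
        exact Finset.sum_congr rfl fun μ' _ => (Finset.mul_sum _ _ _).symm
      rw [e2, e5, hgrad, pow_two]
      calc (Ffun g Ω x)⁻¹ * (Ffun g Ω x)⁻¹ * (epsn g Ω x * (Ffun g Ω x * Ffun g Ω x))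
          = epsn g Ω x * (Ffun g Ω x * (Ffun g Ω x)⁻¹) * (Ffun g Ω x * (Ffun g Ω x)⁻¹) := by
            ring
        _ = epsn g Ω x := by rw [mul_inv_cancel₀ hFne]; ring
    have hε : epsn g Ω x * epsn g Ω x = 1 := by
      unfold epsn
      rcases hgs0.lt_or_gt with h|h
      · rw [Real.sign_of_neg h]; norm_num
      · rw [Real.sign_of_pos h]; norm_num
    have hkey := SOne.keyAlg (d := n+1) (n:ℝ) hn0 hn1 (g x)⁻¹ (g x) (q x)
      (SOne.uXf g Ω x) (epsn g Ω x) hGsym hgisym hQsym hinv hu hε μ ν a b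
    have hw := SOne.weyl_diff hU hΩ hgC hghC hqC hginv hghinv hrel hnonnull x hx μ ν a b
    have hc1 : (((n+1 : ℕ) : ℝ)) - 2 = (n:ℝ) - 1 := by push_cast; ring
    have hc2 : (((n+1 : ℕ) : ℝ)) - 1 = (n:ℝ) := by push_cast; ring
    rw [hc1, hc2] at hw
    have hK : Kfun (k+2) g Ω x = Ω x ^ k * SOne.cKf g Ω k x := by
      have e7 : Kfun (k+2) g Ω x = ((k+2 : ℕ):ℝ) * (((k+2 : ℕ):ℝ) - 1) * (Ω x)^k
          * (Ffun g Ω x)^2 := rfl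
      rw [e7]
      unfold SOne.cKf
      push_cast
      ring
    have hEdef : Etensor n (k+2) g gh q Ω μ ν a b x
        = weyl g μ ν a b x - weyl gh μ ν a b x
          + Kfun (k+2) g Ω x * (((n : ℝ) - 2)/((n : ℝ) - 1)) *
              (uUp g Ω μ x * ((1/2) * (uLow g Ω a x * ttLow n g q Ω b ν x
                    - uLow g Ω b x * ttLow n g q Ω a ν x))
                + ((1/2) * (ttUp n g q Ω μ a x * uLow g Ω b x
                    - ttUp n g q Ω μ b x * uLow g Ω a x)) * uLow g Ω ν x)
          - (epsn g Ω x * Kfun (k+2) g Ω x / ((n : ℝ) - 1)) *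
              ((1/2) * (hMix g Ω μ a x * ttLow n g q Ω b ν x
                    - hMix g Ω μ b x * ttLow n g q Ω a ν x)
                + (1/2) * (ttUp n g q Ω μ a x * hLow g Ω b ν x
                    - ttUp n g q Ω μ b x * hLow g Ω a ν x)) := rfl
    have eb1 : ∀ μ', uUp g Ω μ' x = SOne.uU (g x)⁻¹ (SOne.uXf g Ω x) μ' := fun _ => rfl
    have eb2 : ∀ α' β', ttLow n g q Ω α' β' x
        = SOne.ttL (n:ℝ) (g x)⁻¹ (g x) (q x) (SOne.uXf g Ω x) (epsn g Ω x) α' β' :=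
      fun _ _ => rfl
    have eb3 : ∀ α', uLow g Ω α' x = SOne.uXf g Ω x α' := fun _ => rfl
    have eb4 : ∀ μ' α', ttUp n g q Ω μ' α' x
        = SOne.ttU (n:ℝ) (g x)⁻¹ (g x) (q x) (SOne.uXf g Ω x) (epsn g Ω x) μ' α' :=
      fun _ _ => rfl
    have eb5 : ∀ μ' α', hMix g Ω μ' α' x
        = SOne.hM (g x)⁻¹ (g x) (SOne.uXf g Ω x) (epsn g Ω x) μ' α' := fun _ _ => rfl
    have eb6 : ∀ α' β', hLow g Ω α' β' x
        = SOne.hL (g x) (SOne.uXf g Ω x) (epsn g Ω x) α' β' := fun _ _ => rfl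
    rw [hEdef]
    simp only [eb1, eb2, eb3, eb4, eb5, eb6, hK]
    linear_combination hw + (Ω x^k * SOne.cKf g Ω k x) * hkey
  -- pass to the limit
  have hρcont : ContinuousOn (SOne.rhoW g gh q Ω k μ ν a b) U :=
    SOne.rhoW_cont hU hΩ hgC hghC hqC hginv hghinv μ ν a b
  have hΩc : ContinuousAt Ω x₀ :=
    ((hΩ.of_le one_le_two).continuousOn).continuousAt (hU.mem_nhds hx₀)
  have hρat : ContinuousAt (SOne.rhoW g gh q Ω k μ ν a b) x₀ :=
    hρcont.continuousAt (hU.mem_nhds hx₀)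
  have hlim : Filter.Tendsto (fun x => Ω x * SOne.rhoW g gh q Ω k μ ν a b x)
      (nhdsWithin x₀ {x | x ∈ U ∧ Ω x ≠ 0}) (nhds 0) := by
    have h1 : Filter.Tendsto (fun x => Ω x * SOne.rhoW g gh q Ω k μ ν a b x)
        (nhds x₀) (nhds (Ω x₀ * SOne.rhoW g gh q Ω k μ ν a b x₀)) :=
      Filter.Tendsto.mul hΩc hρat
    rw [hΩ0, zero_mul] at h1
    exact h1.mono_left nhdsWithin_le_nhds
  refine Filter.Tendsto.congr' ?_ hlim
  refine Filter.eventuallyEq_of_mem self_mem_nhdsWithin fun x hx => ?_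
  obtain ⟨hxU, hxΩ⟩ := hx
  show Ω x * SOne.rhoW g gh q Ω k μ ν a b x
      = Ω x ^ ((2 : ℤ) - ((k+2 : ℕ) : ℤ)) * Etensor n (k+2) g gh q Ω μ ν a b x
  rw [hE x hxU]
  rw [show ((2 : ℤ) - ((k+2 : ℕ) : ℤ)) = -(k:ℤ) from by push_cast; ring]
  rw [show Ω x ^ (k+1) = Ω x ^ ((k+1 : ℕ) : ℤ) from (zpow_natCast _ _).symm]
  rw [← mul_assoc, ← zpow_add₀ hxΩ]
  rw [show (-(k:ℤ) + ((k+1 : ℕ) : ℤ)) = 1 from by push_cast; ring, zpow_one]
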